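/- arXiv:1808.04626 — 8 statements merged into one kernel-verified Lean document; each statement's English description precedes it below -/
import Mathlib

section
/- For a real random variable U whose values all lie in an interval of length c (i.e., any two values differ by at most c), one has E[exp(U - E[U])] ≤ exp(c²/8). -/
open Real

private lemma phi_pos (p : ℝ) (hp0 : 0 ≤ p) (hp1 : p ≤ 1) (t : ℝ) :
    0 < 1 - p + p * Real.exp t := by
  rcases le_or_gt (Real.exp t) 1 with h | h
  · nlinarith [Real.exp_pos t, mul_nonneg hp0 (Real.exp_pos t).le]
  · nlinarith [mul_nonneg (sub_nonneg.2 hp1) (Real.exp_pos t).le]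

private lemma hoeffding_key (p : ℝ) (hp0 : 0 ≤ p) (hp1 : p ≤ 1) (h : ℝ) (hh : 0 ≤ h) :
    1 - p + p * Real.exp h ≤ Real.exp (p * h + h ^ 2 / 8) := by
  have hφ := phi_pos p hp0 hp1
  set g : ℝ → ℝ := fun t => p * t + t ^ 2 / 8 - Real.log (1 - p + p * Real.exp t) with hgdef
  set g1 : ℝ → ℝ := fun t => p + t / 4 - p * Real.exp t / (1 - p + p * Real.exp t) with hg1def
  have hφd : ∀ t : ℝ, HasDerivAt (fun t => 1 - p + p * Real.exp t) (p * Real.exp t) t := by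
    intro t
    simpa using ((Real.hasDerivAt_exp t).const_mul p).const_add (1 - p)
  have hgd : ∀ t : ℝ, HasDerivAt g (g1 t) t := by
    intro t
    have h1 : HasDerivAt (fun t : ℝ => p * t) p t := by
      simpa using (hasDerivAt_id t).const_mul p
    have h2 : HasDerivAt (fun t : ℝ => t ^ 2 / 8) (t / 4) t := by
      have := (hasDerivAt_pow 2 t).div_const 8
      exact this.congr_deriv (by ring)
    have h3 : HasDerivAt (fun t => Real.log (1 - p + p * Real.exp t))
        (p * Real.exp t / (1 - p + p * Real.exp t)) t := (hφd t).log (hφ t).ne'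
    exact (h1.add h2).sub h3
  have hg1d : ∀ t : ℝ, HasDerivAt g1
      (1 / 4 - p * (1 - p) * Real.exp t / (1 - p + p * Real.exp t) ^ 2) t := by
    intro t
    have h1 : HasDerivAt (fun t : ℝ => p + t / 4) (1 / 4) t := by
      simpa using ((hasDerivAt_id t).div_const 4).const_add p
    have h2 : HasDerivAt (fun t => p * Real.exp t / (1 - p + p * Real.exp t))
        ((p * Real.exp t * (1 - p + p * Real.exp t) - p * Real.exp t * (p * Real.exp t)) /
          ((1 - p + p * Real.exp t) ^ 2)) t :=
      ((Real.hasDerivAt_exp t).const_mul p).div (hφd t) (hφ t).ne'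
    have h3 := h1.sub h2
    have h0 := (hφ t).ne'
    exact h3.congr_deriv (by ring)
  have hg1nonneg : ∀ t : ℝ, 0 ≤ t → 0 ≤ g1 t := by
    have hg1mono : Monotone g1 := by
      apply monotone_of_deriv_nonneg (fun t => (hg1d t).differentiableAt)
      intro t
      rw [(hg1d t).deriv, sub_nonneg, div_le_iff₀ (pow_pos (hφ t) 2)]
      nlinarith [sq_nonneg ((1 - p) - p * Real.exp t), Real.exp_pos t]
    intro t ht
    have h0 : g1 0 = 0 := by simp [hg1def]
    calc (0:ℝ) = g1 0 := h0.symm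
      _ ≤ g1 t := hg1mono ht
  have hgmono : MonotoneOn g (Set.Ici 0) := by
    apply monotoneOn_of_deriv_nonneg (convex_Ici 0)
    · exact Continuous.continuousOn (by
        have : Differentiable ℝ g := fun t => (hgd t).differentiableAt
        exact this.continuous)
    · exact fun t _ => ((hgd t).differentiableAt).differentiableWithinAt
    · intro t ht
      rw [(hgd t).deriv]
      exact hg1nonneg t (le_of_lt (by simpa using ht))
  have hg0 : g 0 = 0 := by simp [hgdef]
  have hgh : 0 ≤ g h := by
    calc (0:ℝ) = g 0 := hg0.symm
      _ ≤ g h := hgmono (Set.mem_Ici.2 le_rfl) (Set.mem_Ici.2 hh) hh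
  have hlog : Real.log (1 - p + p * Real.exp h) ≤ p * h + h ^ 2 / 8 := by
    simp only [hgdef] at hgh
    linarith
  calc 1 - p + p * Real.exp h
      = Real.exp (Real.log (1 - p + p * Real.exp h)) := (Real.exp_log (hφ h)).symm
    _ ≤ Real.exp (p * h + h ^ 2 / 8) := Real.exp_le_exp.2 hlog

/-- Hoeffding's lemma on a finite probability space: if any two values of a
real random variable `U` differ by at most `c`, then
`E[exp(U - E U)] ≤ exp (c²/8)`. -/
theorem hoeffding_lemma {Ω : Type*} [Fintype Ω] (w : Ω → ℝ)
    (hw_nonneg : ∀ ω, 0 ≤ w ω) (hw_sum : ∑ ω, w ω = 1)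
    (U : Ω → ℝ) (c : ℝ) (hc : 0 ≤ c)
    (hU : ∀ ω ω', |U ω - U ω'| ≤ c) :
    ∑ ω, w ω * Real.exp (U ω - ∑ ω', w ω' * U ω') ≤ Real.exp (c ^ 2 / 8) := by
  classical
  -- Ω is nonempty
  rcases isEmpty_or_nonempty Ω with hΩ | hΩ
  · simp [Finset.univ_eq_empty] at hw_sum
  have hne : (Finset.univ : Finset Ω).Nonempty := Finset.univ_nonempty
  set m : ℝ := ∑ ω', w ω' * U ω' with hm
  set V : Ω → ℝ := fun ω => U ω - m with hVdef
  have hVsum : ∑ ω, w ω * V ω = 0 := by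
    simp only [hVdef, mul_sub, Finset.sum_sub_distrib, ← Finset.sum_mul, hw_sum]
    simp [hm]
  set a : ℝ := Finset.univ.inf' hne V with ha
  set b : ℝ := Finset.univ.sup' hne V with hb
  have haV : ∀ ω, a ≤ V ω := fun ω => Finset.inf'_le _ (Finset.mem_univ ω)
  have hVb : ∀ ω, V ω ≤ b := fun ω => Finset.le_sup' _ (Finset.mem_univ ω)
  have hba : b - a ≤ c := by
    obtain ⟨ω₁, -, hω₁⟩ := Finset.exists_mem_eq_sup' hne V
    obtain ⟨ω₂, -, hω₂⟩ := Finset.exists_mem_eq_inf' hne V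
    have : b - a = U ω₁ - U ω₂ := by rw [hb, ha, hω₁, hω₂]; simp [hVdef]
    rw [this]
    exact (le_abs_self _).trans (hU ω₁ ω₂)
  have ha0 : a ≤ 0 := by
    have h1 : ∑ ω, w ω * a ≤ ∑ ω, w ω * V ω :=
      Finset.sum_le_sum fun ω _ => mul_le_mul_of_nonneg_left (haV ω) (hw_nonneg ω)
    rw [hVsum, ← Finset.sum_mul, hw_sum, one_mul] at h1
    exact h1
  have hb0 : 0 ≤ b := by
    have h1 : ∑ ω, w ω * V ω ≤ ∑ ω, w ω * b :=
      Finset.sum_le_sum fun ω _ => mul_le_mul_of_nonneg_left (hVb ω) (hw_nonneg ω)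
    rw [hVsum, ← Finset.sum_mul, hw_sum, one_mul] at h1
    exact h1
  rcases eq_or_lt_of_le (sub_nonneg.2 (ha0.trans hb0)) with hh0 | hh0
  · -- degenerate case: a = b = 0, so V ≡ 0
    have hab : a = b := by linarith [hh0.symm]
    have ha' : a = 0 := le_antisymm ha0 (hab ▸ hb0)
    have hb' : b = 0 := by linarith
    have hV0 : ∀ ω, V ω = 0 := fun ω =>
      le_antisymm (by linarith [hVb ω]) (by linarith [haV ω])
    calc ∑ ω, w ω * Real.exp (U ω - m) = ∑ ω, w ω * Real.exp (V ω) := rfl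
      _ = 1 := by
          rw [← hw_sum]
          exact Finset.sum_congr rfl fun ω _ => by rw [hV0 ω, Real.exp_zero, mul_one]
      _ ≤ Real.exp (c ^ 2 / 8) := Real.one_le_exp (by positivity)
  · -- main case: h := b - a > 0
    set hgap : ℝ := b - a with hgapdef
    set p : ℝ := -a / hgap with hpdef
    have hp0 : 0 ≤ p := div_nonneg (by linarith) hh0.le
    have hp1 : p ≤ 1 := by
      rw [div_le_one hh0]
      linarith
    -- chord bound
    have hchord : ∀ ω, Real.exp (V ω) ≤
        ((b - V ω) * Real.exp a + (V ω - a) * Real.exp b) / hgap := by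
      intro ω
      have hμ : (0:ℝ) ≤ (b - V ω) / hgap := div_nonneg (by linarith [hVb ω]) hh0.le
      have hν : (0:ℝ) ≤ (V ω - a) / hgap := div_nonneg (by linarith [haV ω]) hh0.le
      have hsum : (b - V ω) / hgap + (V ω - a) / hgap = 1 := by
        field_simp
        rw [hgapdef]; ring
      have := convexOn_exp.2 (Set.mem_univ a) (Set.mem_univ b) hμ hν hsum
      simp only [smul_eq_mul] at this
      have harg : (b - V ω) / hgap * a + (V ω - a) / hgap * b = V ω := by
        field_simp
        ring
      rw [harg] at this
      calc Real.exp (V ω) ≤ (b - V ω) / hgap * Real.exp a + (V ω - a) / hgap * Real.exp b := this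
        _ = ((b - V ω) * Real.exp a + (V ω - a) * Real.exp b) / hgap := by ring
    have hsum1 : ∑ ω, w ω * Real.exp (V ω) ≤ (b * Real.exp a - a * Real.exp b) / hgap := by
      calc ∑ ω, w ω * Real.exp (V ω)
          ≤ ∑ ω, w ω * (((b - V ω) * Real.exp a + (V ω - a) * Real.exp b) / hgap) :=
            Finset.sum_le_sum fun ω _ =>
              mul_le_mul_of_nonneg_left (hchord ω) (hw_nonneg ω)
        _ = (b * Real.exp a - a * Real.exp b) / hgap := by
            have expand : ∀ ω, w ω * (((b - V ω) * Real.exp a + (V ω - a) * Real.exp b) / hgap)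
                = (w ω * (b * Real.exp a - a * Real.exp b)
                  + (w ω * V ω) * (Real.exp b - Real.exp a)) / hgap := by
              intro ω; ring
            rw [Finset.sum_congr rfl fun ω _ => expand ω, ← Finset.sum_div]
            rw [Finset.sum_add_distrib, ← Finset.sum_mul, ← Finset.sum_mul, hw_sum, hVsum]
            ring
    have hident : (b * Real.exp a - a * Real.exp b) / hgap
        = Real.exp a * (1 - p + p * Real.exp hgap) := by
      have hb' : b = a + hgap := by rw [hgapdef]; ring
      rw [hb', Real.exp_add, hpdef]
      field_simp
      ring
    have hkey := hoeffding_key p hp0 hp1 hgap hh0.le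
    have hfinal : Real.exp a * (1 - p + p * Real.exp hgap)
        ≤ Real.exp (hgap ^ 2 / 8) := by
      calc Real.exp a * (1 - p + p * Real.exp hgap)
          ≤ Real.exp a * Real.exp (p * hgap + hgap ^ 2 / 8) :=
            mul_le_mul_of_nonneg_left hkey (Real.exp_pos a).le
        _ = Real.exp (a + (p * hgap + hgap ^ 2 / 8)) := (Real.exp_add _ _).symm
        _ = Real.exp (hgap ^ 2 / 8) := by
            congr 1
            have : p * hgap = -a := by rw [hpdef]; field_simp
            rw [this]; ring
    calc ∑ ω, w ω * Real.exp (U ω - m) = ∑ ω, w ω * Real.exp (V ω) := rfl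
      _ ≤ (b * Real.exp a - a * Real.exp b) / hgap := hsum1
      _ = Real.exp a * (1 - p + p * Real.exp hgap) := hident
      _ ≤ Real.exp (hgap ^ 2 / 8) := hfinal
      _ ≤ Real.exp (c ^ 2 / 8) := by
          apply Real.exp_le_exp.2
          have : hgap ≤ c := hba
          nlinarith [hh0.le]
end

section
/- For every t ≥ 0 and p ∈ [0,1], ln(1 - p + p·e^t) - p·t ≤ t²/8. -/
/-- Key analytic step in Hoeffding's lemma: for every `t ≥ 0` and `p ∈ [0,1]`,
`ln(1 - p + p·e^t) - p·t ≤ t²/8`. -/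
theorem log_convexity_bound (t p : ℝ) (ht : 0 ≤ t) (hp : p ∈ Set.Icc (0 : ℝ) 1) :
    Real.log (1 - p + p * Real.exp t) - p * t ≤ t ^ 2 / 8 := by
  obtain ⟨hp0, hp1⟩ := hp
  set D : ℝ → ℝ := fun s => 1 - p + p * Real.exp s with hDdef
  have hDpos : ∀ s, 0 < D s := by
    intro s
    have he := Real.exp_pos s
    rcases lt_or_eq_of_le hp1 with h | h
    · have h1 : 0 ≤ p * Real.exp s := by positivity
      simp only [hDdef]; nlinarith
    · simp only [hDdef, h]; simpa using he
  have hDderiv : ∀ s : ℝ, HasDerivAt D (p * Real.exp s) s := fun s =>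
    ((Real.hasDerivAt_exp s).const_mul p).const_add (1 - p)
  -- k s = s/4 + p - p e^s / D s
  set k : ℝ → ℝ := fun s => s / 4 + p - p * Real.exp s / D s with hkdef
  have hkderiv : ∀ s : ℝ, HasDerivAt k
      (1 / 4 - (p * Real.exp s * D s - p * Real.exp s * (p * Real.exp s)) / (D s) ^ 2) s := by
    intro s
    have h1 : HasDerivAt (fun s : ℝ => p * Real.exp s) (p * Real.exp s) s :=
      (Real.hasDerivAt_exp s).const_mul p
    have h2 := (h1.div (hDderiv s) (hDpos s).ne')
    have h3 : HasDerivAt (fun s : ℝ => s / 4 + p) (1 / 4) s := by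
      simpa using ((hasDerivAt_id s).div_const 4).add_const p
    exact h3.sub h2
  have hknonneg : ∀ s ∈ Set.Ici (0 : ℝ), 0 ≤ k s := by
    have hmono : MonotoneOn k (Set.Ici (0 : ℝ)) := by
      apply monotoneOn_of_deriv_nonneg (convex_Ici 0)
      · exact fun s _ => ((hkderiv s).continuousAt).continuousWithinAt
      · exact fun s _ => ((hkderiv s).differentiableAt).differentiableWithinAt
      · intro s _
        rw [(hkderiv s).deriv]
        have hd := hDpos s
        have he := Real.exp_pos s
        have key : p * Real.exp s * D s - p * Real.exp s * (p * Real.exp s)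
            = p * (1 - p) * Real.exp s := by simp only [hDdef]; ring
        rw [key]
        rw [sub_nonneg, div_le_iff₀ (by positivity)]
        have : 0 ≤ ((1 - p) - p * Real.exp s) ^ 2 := sq_nonneg _
        simp only [hDdef] at *
        nlinarith
    intro s hs
    have hk0 : k 0 = 0 := by
      simp only [hkdef, hDdef, Real.exp_zero, mul_one]
      field_simp
      ring
    calc (0 : ℝ) = k 0 := hk0.symm
    _ ≤ k s := hmono (Set.self_mem_Ici) hs hs
  -- h s = s^2/8 + p s - log (D s)
  set h : ℝ → ℝ := fun s => s ^ 2 / 8 + p * s - Real.log (D s) with hhdef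
  have hhderiv : ∀ s : ℝ, HasDerivAt h (s / 4 + p - p * Real.exp s / D s) s := by
    intro s
    have h1 : HasDerivAt (fun s : ℝ => s ^ 2 / 8 + p * s) (s / 4 + p) s := by
      have := ((hasDerivAt_pow 2 s).div_const 8).add ((hasDerivAt_id s).const_mul p)
      exact this.congr_deriv (by ring)
    have h2 : HasDerivAt (fun s => Real.log (D s)) (p * Real.exp s / D s) s :=
      (hDderiv s).log (hDpos s).ne'
    exact h1.sub h2
  have hmono : MonotoneOn h (Set.Ici (0 : ℝ)) := by
    apply monotoneOn_of_deriv_nonneg (convex_Ici 0)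
    · exact fun s _ => ((hhderiv s).continuousAt).continuousWithinAt
    · exact fun s _ => ((hhderiv s).differentiableAt).differentiableWithinAt
    · intro s hs
      rw [(hhderiv s).deriv]
      exact hknonneg s (le_of_lt (by simpa using hs))
  have hh0 : h 0 = 0 := by
    simp [hhdef, hDdef]
  have := hmono (Set.self_mem_Ici) (Set.mem_Ici.mpr ht) ht
  rw [hh0] at this
  simp only [hhdef, hDdef] at this
  linarith
end

section
/- Let f : X₁ × … × X_n → ℝ satisfy the bounded differences property: if x and x' coincide in all coordinates except the i-th, then |f(x) - f(x')| ≤ c_i. Then for the product measure on X₁ × … × X_n and every z ≥ 0, Pr[f - E[f] ≥ z] ≤ exp(-2z² / Σᵢ c_i²). -/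
open Finset

section McDiarmidAux

private lemma mcd_Dpos (q : ℝ) (hq0 : 0 ≤ q) (hq1 : q ≤ 1) {E : ℝ} (hE : 0 < E) :
    0 < 1 - q + q * E := by
  rcases lt_or_eq_of_le hq1 with h1 | h1
  · have : 0 ≤ q * E := mul_nonneg hq0 hE.le
    linarith
  · nlinarith


private lemma mcd_core (q : ℝ) (hq0 : 0 ≤ q) (hq1 : q ≤ 1) (h : ℝ) :
    -(q * h) + Real.log (1 - q + q * Real.exp h) ≤ h ^ 2 / 8 := by
  have hDpos : ∀ x : ℝ, 0 < 1 - q + q * Real.exp x := by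
    intro x
    rcases lt_or_eq_of_le hq1 with h1 | h1
    · have : 0 ≤ q * Real.exp x := mul_nonneg hq0 (Real.exp_pos x).le
      linarith
    · nlinarith [Real.exp_pos x]
  set D : ℝ → ℝ := fun x => 1 - q + q * Real.exp x with hD
  set g1 : ℝ → ℝ := fun x => -q + q * Real.exp x / D x with hg1
  set φ : ℝ → ℝ := fun x => x ^ 2 / 8 - (-(q * x) + Real.log (D x)) with hφ
  set φ1 : ℝ → ℝ := fun x => x / 4 - g1 x with hφ1
  have hDd : ∀ x, HasDerivAt D (q * Real.exp x) x := by
    intro x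
    exact ((Real.hasDerivAt_exp x).const_mul q).const_add (1 - q)
  have hφd : ∀ x, HasDerivAt φ (φ1 x) x := by
    intro x
    have h1 : HasDerivAt (fun x : ℝ => x ^ 2 / 8) (x / 4) x := by
      simpa [mul_comm] using (hasDerivAt_pow 2 x).div_const 8 |>.congr_deriv (by ring)
    have h2 : HasDerivAt (fun x => Real.log (D x)) (q * Real.exp x / D x) x :=
      (hDd x).log (hDpos x).ne'
    have h3 : HasDerivAt (fun x : ℝ => -(q * x)) (-q) x := by
      exact (((hasDerivAt_id x).const_mul q).neg).congr_deriv (by simp)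
    have := h1.sub (h3.add h2)
    exact this
  have hφ1d : ∀ x, HasDerivAt φ1 (1 / 4 - q * Real.exp x * (1 - q) / (D x) ^ 2) x := by
    intro x
    have h1 : HasDerivAt (fun x : ℝ => x / 4) (1 / 4) x := by
      simpa using (hasDerivAt_id x).div_const 4
    have h2 : HasDerivAt (fun x => q * Real.exp x) (q * Real.exp x) x :=
      (Real.hasDerivAt_exp x).const_mul q
    have h3 : HasDerivAt (fun x => q * Real.exp x / D x)
        ((q * Real.exp x * D x - q * Real.exp x * (q * Real.exp x)) / (D x) ^ 2) x :=
      h2.div (hDd x) (hDpos x).ne'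
    have h4 : HasDerivAt g1 ((q * Real.exp x * D x - q * Real.exp x * (q * Real.exp x)) / (D x) ^ 2) x := by
      simpa [g1] using h3.const_add (-q)
    have := h1.sub h4
    refine this.congr_deriv ?_
    have : q * Real.exp x * D x - q * Real.exp x * (q * Real.exp x)
        = q * Real.exp x * (1 - q) := by simp [hD]; ring
    rw [this]
  have hφ1nonneg : ∀ x, 0 ≤ 1 / 4 - q * Real.exp x * (1 - q) / (D x) ^ 2 := by
    intro x
    have hD2 : 0 < (D x) ^ 2 := pow_pos (hDpos x) 2
    rw [sub_nonneg, div_le_iff₀ hD2]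
    have hsq : ((1 - q) - q * Real.exp x) ^ 2 ≥ 0 := sq_nonneg _
    simp only [hD]
    nlinarith [hsq]
  have hφ1mono : Monotone φ1 :=
    monotone_of_hasDerivAt_nonneg hφ1d (fun x => hφ1nonneg x)
  have hφ10 : φ1 0 = 0 := by
    simp [φ1, g1, hD]
  have hφ0 : φ 0 = 0 := by
    simp [φ, hD]
  -- now conclude 0 ≤ φ h
  have hfinal : 0 ≤ φ h := by
    rcases le_total 0 h with hh | hh
    · have hmono : MonotoneOn φ (Set.Ici 0) := by
        apply monotoneOn_of_hasDerivWithinAt_nonneg (convex_Ici 0)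
          (fun x _ => (hφd x).continuousAt.continuousWithinAt)
          (fun x _ => (hφd x).hasDerivWithinAt)
        intro x hx
        rw [interior_Ici] at hx
        have : φ1 0 ≤ φ1 x := hφ1mono (le_of_lt hx)
        linarith [hφ10 ▸ this]
      have := hmono (Set.self_mem_Ici) (Set.mem_Ici.mpr hh) hh
      linarith [hφ0 ▸ this]
    · have hanti : AntitoneOn φ (Set.Iic 0) := by
        apply antitoneOn_of_deriv_nonpos (convex_Iic 0)
          (fun x _ => (hφd x).continuousAt.continuousWithinAt)
          (fun x hx => ((hφd x).differentiableAt).differentiableWithinAt)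
        intro x hx
        rw [interior_Iic] at hx
        rw [(hφd x).deriv]
        have : φ1 x ≤ φ1 0 := hφ1mono (le_of_lt hx)
        linarith [hφ10 ▸ this]
      have := hanti (Set.mem_Iic.mpr hh) (Set.self_mem_Iic) hh
      linarith [hφ0 ▸ this]
  simp only [hφ] at hfinal
  linarith


private lemma mcd_hoeffding {α : Type*} [Fintype α] (p : α → ℝ)
    (hp : ∀ a, 0 ≤ p a) (hs : ∑ a, p a = 1) (φ : α → ℝ) (c : ℝ) (hc : 0 ≤ c)
    (hosc : ∀ a b, φ a - φ b ≤ c) (t : ℝ) :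
    ∑ a, p a * Real.exp (t * φ a) ≤
      Real.exp (t * (∑ a, p a * φ a) + t ^ 2 * c ^ 2 / 8) := by
  have hne : (Finset.univ : Finset α).Nonempty := by
    rcases Finset.eq_empty_or_nonempty (Finset.univ : Finset α) with h | h
    · exfalso; rw [h] at hs; simp at hs
    · exact h
  obtain ⟨a₀, -, hmin⟩ := Finset.exists_min_image Finset.univ φ hne
  set A := φ a₀ with hA
  set B := A + c with hB
  have hbounds : ∀ a, A ≤ φ a ∧ φ a ≤ B := fun a =>
    ⟨hmin a (mem_univ a), by have := hosc a a₀; simp only [hB]; linarith⟩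
  set m := ∑ a, p a * φ a with hm
  have hmA : A ≤ m := by
    calc A = ∑ a, p a * A := by rw [← Finset.sum_mul, hs, one_mul]
    _ ≤ m := Finset.sum_le_sum fun a _ =>
        mul_le_mul_of_nonneg_left (hbounds a).1 (hp a)
  have hmB : m ≤ B := by
    calc m ≤ ∑ a, p a * B := Finset.sum_le_sum fun a _ =>
        mul_le_mul_of_nonneg_left (hbounds a).2 (hp a)
    _ = B := by rw [← Finset.sum_mul, hs, one_mul]
  rcases eq_or_lt_of_le hc with hc0 | hcpos
  · -- c = 0 : φ is constant equal to A
    have hconst : ∀ a, φ a = A := fun a =>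
      le_antisymm (by have := (hbounds a).2; rw [hB, ← hc0] at this; linarith) (hbounds a).1
    have hmval : m = A := by
      rw [hm]
      calc ∑ a, p a * φ a = ∑ a, p a * A :=
            Finset.sum_congr rfl fun a _ => by rw [hconst a]
      _ = A := by rw [← Finset.sum_mul, hs, one_mul]
    have hLHS : ∑ a, p a * Real.exp (t * φ a) = Real.exp (t * A) := by
      calc ∑ a, p a * Real.exp (t * φ a) = ∑ a, p a * Real.exp (t * A) :=
            Finset.sum_congr rfl fun a _ => by rw [hconst a]
      _ = Real.exp (t * A) := by rw [← Finset.sum_mul, hs, one_mul]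
    rw [hLHS, hmval]
    apply Real.exp_le_exp.mpr
    nlinarith [sq_nonneg t, sq_nonneg c]
  · -- c > 0
    set q := (m - A) / c with hq
    have hq0 : 0 ≤ q := div_nonneg (by linarith) hcpos.le
    have hq1 : q ≤ 1 := by
      rw [hq, div_le_one hcpos]; rw [hB] at hmB; linarith
    have step1 : ∀ a, Real.exp (t * φ a) ≤
        (B - φ a) / c * Real.exp (t * A) + (φ a - A) / c * Real.exp (t * B) := by
      intro a
      have h1 : (0:ℝ) ≤ (B - φ a) / c := div_nonneg (by linarith [(hbounds a).2]) hcpos.le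
      have h2 : (0:ℝ) ≤ (φ a - A) / c := div_nonneg (by linarith [(hbounds a).1]) hcpos.le
      have h3 : (B - φ a) / c + (φ a - A) / c = 1 := by
        rw [← add_div, hB]
        field_simp
        ring
      have hcvx := convexOn_exp.2 (Set.mem_univ (t * A)) (Set.mem_univ (t * B)) h1 h2 h3
      simp only [smul_eq_mul] at hcvx
      have harg : (B - φ a) / c * (t * A) + (φ a - A) / c * (t * B) = t * φ a := by
        field_simp
        rw [hB]; ring
      rwa [harg] at hcvx
    have eα : ∑ a, p a * ((B - φ a) / c) = 1 - q := by
      have e1 : ∑ a, p a * ((B - φ a) / c) = (∑ a, p a * (B - φ a)) / c := by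
        rw [Finset.sum_div]; exact Finset.sum_congr rfl fun a _ => (mul_div_assoc _ _ _).symm
      have e2 : ∑ a, p a * (B - φ a) = B - m := by
        simp only [mul_sub]
        rw [Finset.sum_sub_distrib, ← Finset.sum_mul, hs, one_mul, hm]
      rw [e1, e2, hq, hB]
      field_simp
      ring
    have eβ : ∑ a, p a * ((φ a - A) / c) = q := by
      have e1 : ∑ a, p a * ((φ a - A) / c) = (∑ a, p a * (φ a - A)) / c := by
        rw [Finset.sum_div]; exact Finset.sum_congr rfl fun a _ => (mul_div_assoc _ _ _).symm
      have e2 : ∑ a, p a * (φ a - A) = m - A := by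
        simp only [mul_sub]
        rw [Finset.sum_sub_distrib, ← Finset.sum_mul, hs, one_mul, hm]
      rw [e1, e2, hq]
    have step2 : ∑ a, p a * Real.exp (t * φ a) ≤
        (1 - q) * Real.exp (t * A) + q * Real.exp (t * B) := by
      calc ∑ a, p a * Real.exp (t * φ a)
          ≤ ∑ a, p a * ((B - φ a) / c * Real.exp (t * A) + (φ a - A) / c * Real.exp (t * B)) :=
            Finset.sum_le_sum fun a _ => mul_le_mul_of_nonneg_left (step1 a) (hp a)
        _ = (∑ a, p a * ((B - φ a) / c)) * Real.exp (t * A)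
            + (∑ a, p a * ((φ a - A) / c)) * Real.exp (t * B) := by
            rw [Finset.sum_mul, Finset.sum_mul, ← Finset.sum_add_distrib]
            exact Finset.sum_congr rfl fun a _ => by ring
        _ = (1 - q) * Real.exp (t * A) + q * Real.exp (t * B) := by rw [eα, eβ]
    have hAm : A = m - q * c := by rw [hq]; field_simp; ring
    have hBm : B = m - q * c + c := by rw [hB, ← hAm]
    have hDpos : 0 < 1 - q + q * Real.exp (t * c) := mcd_Dpos q hq0 hq1 (Real.exp_pos _)
    have step3 : (1 - q) * Real.exp (t * A) + q * Real.exp (t * B)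
        = Real.exp (t * m) * Real.exp (-(q * (t * c)) + Real.log (1 - q + q * Real.exp (t * c))) := by
      have e1 : t * A = t * m + -(q * (t * c)) := by rw [hAm]; ring
      have e2 : t * B = (t * m + -(q * (t * c))) + t * c := by rw [hBm]; ring
      rw [Real.exp_add, Real.exp_log hDpos, e1, e2]
      simp only [Real.exp_add]
      ring
    calc ∑ a, p a * Real.exp (t * φ a)
        ≤ Real.exp (t * m) * Real.exp (-(q * (t * c)) + Real.log (1 - q + q * Real.exp (t * c))) := by
          rw [← step3]; exact step2
      _ ≤ Real.exp (t * m) * Real.exp ((t * c) ^ 2 / 8) := by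
          apply mul_le_mul_of_nonneg_left _ (Real.exp_pos _).le
          exact Real.exp_le_exp.mpr (mcd_core q hq0 hq1 (t * c))
      _ = Real.exp (t * m + t ^ 2 * c ^ 2 / 8) := by
          rw [← Real.exp_add]
          congr 1
          ring


variable {n : ℕ} {X : Fin n → Type*} [∀ i, Fintype (X i)] [∀ i, DecidableEq (X i)]

set_option linter.unusedSectionVars false

/-- Partially integrated product weights: coordinates `< k` are pinned to `x`,
coordinates `≥ k` carry weight `p`. -/
private def mcdW (p : ∀ i, X i → ℝ) (k : ℕ) (x y : ∀ j, X j) : ℝ :=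
  ∏ i : Fin n, if (i : ℕ) < k then (if y i = x i then 1 else 0) else p i (y i)

private lemma mcdW_nonneg (p : ∀ i, X i → ℝ) (hp : ∀ i a, 0 ≤ p i a)
    (k : ℕ) (x y : ∀ j, X j) : 0 ≤ mcdW p k x y := by
  apply Finset.prod_nonneg
  intro i _
  rcases lt_or_ge (i : ℕ) k with h | h
  · rw [if_pos h]; split_ifs <;> norm_num
  · rw [if_neg (not_lt.mpr h)]; exact hp i (y i)

private lemma mcdW_sum (p : ∀ i, X i → ℝ) (hp_sum : ∀ i, ∑ a, p i a = 1)
    (k : ℕ) (x : ∀ j, X j) : ∑ y, mcdW p k x y = 1 := by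
  unfold mcdW
  have hps := Fintype.prod_sum (fun (i : Fin n) (b : X i) =>
    if (i : ℕ) < k then (if b = x i then (1:ℝ) else 0) else p i b)
  rw [← hps]
  apply Finset.prod_eq_one
  intro i _
  by_cases h : (i : ℕ) < k
  · simp only [if_pos h]
    rw [Finset.sum_ite_eq' Finset.univ (x i) (fun _ => (1:ℝ))]
    simp
  · simp only [if_neg h]
    exact hp_sum i

private lemma mcdW_top (p : ∀ i, X i → ℝ) (k : ℕ) (hk : n ≤ k)
    (x : ∀ j, X j) (g : (∀ j, X j) → ℝ) :
    ∑ y, mcdW p k x y * g y = g x := by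
  rw [Finset.sum_eq_single x]
  · have h1 : mcdW p k x x = 1 := by
      unfold mcdW
      apply Finset.prod_eq_one
      intro i _
      rw [if_pos (lt_of_lt_of_le i.isLt hk), if_pos rfl]
    rw [h1, one_mul]
  · intro y _ hyx
    have hex : ∃ i, y i ≠ x i := by
      by_contra hcon
      push_neg at hcon
      exact hyx (funext hcon)
    obtain ⟨i, hi⟩ := hex
    have h0 : mcdW p k x y = 0 := by
      unfold mcdW
      apply Finset.prod_eq_zero (Finset.mem_univ i)
      rw [if_pos (lt_of_lt_of_le i.isLt hk), if_neg hi]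
    rw [h0, zero_mul]
  · intro h; exact absurd (Finset.mem_univ x) h

private lemma mcdW_succ (p : ∀ i, X i → ℝ) (κ : Fin n) (x : ∀ j, X j)
    (g : (∀ j, X j) → ℝ) :
    ∑ y, mcdW p (κ : ℕ) x y * g y
      = ∑ a, p κ a * ∑ y, mcdW p ((κ : ℕ) + 1) (Function.update x κ a) y * g y := by
  have key : ∀ y, mcdW p (κ : ℕ) x y
      = ∑ a, p κ a * mcdW p ((κ : ℕ) + 1) (Function.update x κ a) y := by
    intro y
    set P : ℝ := ∏ i ∈ Finset.univ.erase κ,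
        (if (i : ℕ) < (κ : ℕ) then (if y i = x i then 1 else 0) else p i (y i)) with hP
    have split : ∀ (a : X κ), mcdW p ((κ : ℕ) + 1) (Function.update x κ a) y
        = (if y κ = a then 1 else 0) * P := by
      intro a
      unfold mcdW
      rw [← Finset.mul_prod_erase Finset.univ _ (Finset.mem_univ κ)]
      congr 1
      · rw [if_pos (Nat.lt_succ_self _), Function.update_self]
      · rw [hP]
        apply Finset.prod_congr rfl
        intro i hi
        have hine : i ≠ κ := (Finset.mem_erase.mp hi).1
        have hvalne : (i : ℕ) ≠ (κ : ℕ) := fun h => hine (Fin.ext h)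
        rw [Function.update_of_ne hine]
        have hcond : ((i : ℕ) < (κ : ℕ) + 1) ↔ ((i : ℕ) < (κ : ℕ)) := by omega
        simp only [hcond]
    have split0 : mcdW p (κ : ℕ) x y = p κ (y κ) * P := by
      unfold mcdW
      rw [← Finset.mul_prod_erase Finset.univ _ (Finset.mem_univ κ)]
      congr 1
      rw [if_neg (lt_irrefl _)]
    have hstep : ∑ a, p κ a * ((if y κ = a then 1 else 0) * P)
        = (∑ a, p κ a * (if y κ = a then 1 else 0)) * P := by
      rw [Finset.sum_mul]
      exact Finset.sum_congr rfl fun a _ => by ring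
    simp only [split, split0, hstep]
    congr 1
    symm
    calc ∑ a, p κ a * (if y κ = a then 1 else 0)
        = ∑ a, (if y κ = a then p κ a else 0) :=
          Finset.sum_congr rfl fun a _ => by split_ifs <;> ring
      _ = p κ (y κ) := by rw [Finset.sum_ite_eq Finset.univ (y κ) (p κ)]; simp
  calc ∑ y, mcdW p (κ : ℕ) x y * g y
      = ∑ y, ∑ a, p κ a * (mcdW p ((κ : ℕ) + 1) (Function.update x κ a) y * g y) := by
        apply Finset.sum_congr rfl
        intro y _
        rw [key y, Finset.sum_mul]
        exact Finset.sum_congr rfl fun a _ => by ring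
    _ = ∑ a, p κ a * ∑ y, mcdW p ((κ : ℕ) + 1) (Function.update x κ a) y * g y := by
        rw [Finset.sum_comm]
        exact Finset.sum_congr rfl fun a _ => by rw [Finset.mul_sum]



private lemma mcd_osc (p : ∀ i, X i → ℝ) (hp : ∀ i a, 0 ≤ p i a)
    (hp_sum : ∀ i, ∑ a, p i a = 1)
    (f : (∀ j, X j) → ℝ) (c : Fin n → ℝ)
    (hbdd : ∀ (i : Fin n) (x : ∀ j, X j) (a : X i),
      |f (Function.update x i a) - f x| ≤ c i)
    (κ : Fin n) (x : ∀ j, X j) (a b : X κ) :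
    (∑ y, mcdW p ((κ : ℕ) + 1) (Function.update x κ a) y * f y)
      - (∑ y, mcdW p ((κ : ℕ) + 1) (Function.update x κ b) y * f y) ≤ c κ := by
  classical
  set u : (∀ j, X j) → ℝ := fun y => ∏ i ∈ Finset.univ.erase κ,
      (if (i : ℕ) < (κ : ℕ) + 1 then (if y i = x i then 1 else 0) else p i (y i)) with hu
  have hu0 : ∀ y, 0 ≤ u y := by
    intro y
    apply Finset.prod_nonneg
    intro i _
    rcases lt_or_ge (i : ℕ) ((κ : ℕ) + 1) with h | h
    · rw [if_pos h]; split_ifs <;> norm_num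
    · rw [if_neg (not_lt.mpr h)]; exact hp i (y i)
  have hsplit : ∀ (v : X κ) (y : ∀ j, X j), mcdW p ((κ : ℕ) + 1) (Function.update x κ v) y
      = (if y κ = v then 1 else 0) * u y := by
    intro v y
    unfold mcdW
    rw [← Finset.mul_prod_erase Finset.univ _ (Finset.mem_univ κ)]
    congr 1
    · rw [if_pos (Nat.lt_succ_self _), Function.update_self]
    · rw [hu]
      apply Finset.prod_congr rfl
      intro i hi
      have hine : i ≠ κ := (Finset.mem_erase.mp hi).1
      rw [Function.update_of_ne hine]
  -- the swap bijection
  set m : (∀ j, X j) → (∀ j, X j) :=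
    fun y => Function.update y κ (Equiv.swap a b (y κ)) with hm
  have hminv : Function.Involutive m := by
    intro y
    simp only [hm, Function.update_self, Function.update_idem, Equiv.swap_apply_self,
      Function.update_eq_self]
  have hmne : ∀ (y : ∀ j, X j) (i : Fin n), i ≠ κ → m y i = y i := by
    intro y i hi
    simp only [hm]
    rw [Function.update_of_ne hi]
  have hum : ∀ y, u (m y) = u y := by
    intro y
    rw [hu]
    apply Finset.prod_congr rfl
    intro i hi
    have hine : i ≠ κ := (Finset.mem_erase.mp hi).1
    rw [hmne y i hine]
  have hB : (∑ y, mcdW p ((κ : ℕ) + 1) (Function.update x κ b) y * f y)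
      = ∑ y, (if Equiv.swap a b (y κ) = b then 1 else 0) * u y * f (m y) := by
    rw [← Fintype.sum_bijective m hminv.bijective _ _ (fun y => rfl)]
    apply Finset.sum_congr rfl
    intro y _
    rw [hsplit b (m y), hum y]
    have : (m y) κ = Equiv.swap a b (y κ) := by
      simp only [hm, Function.update_self]
    rw [this]
  have hA : (∑ y, mcdW p ((κ : ℕ) + 1) (Function.update x κ a) y * f y)
      = ∑ y, (if y κ = a then 1 else 0) * u y * f y := by
    apply Finset.sum_congr rfl
    intro y _
    rw [hsplit a y]
  rw [hA, hB, ← Finset.sum_sub_distrib]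
  have hbound : ∀ y : ∀ j, X j,
      (if y κ = a then 1 else 0) * u y * f y
        - (if Equiv.swap a b (y κ) = b then 1 else 0) * u y * f (m y)
      ≤ (if y κ = a then 1 else 0) * u y * c κ := by
    intro y
    by_cases hy : y κ = a
    · have hsw : Equiv.swap a b (y κ) = b := by rw [hy, Equiv.swap_apply_left]
      rw [if_pos hy, if_pos hsw]
      simp only [one_mul]
      have hmy : m y = Function.update y κ b := by
        simp only [hm, hy, Equiv.swap_apply_left]
      rw [hmy]
      have habs := hbdd κ y b
      have h1 : f y - f (Function.update y κ b) ≤ c κ := by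
        rw [abs_le] at habs; linarith [habs.1]
      nlinarith [hu0 y, mul_le_mul_of_nonneg_left h1 (hu0 y)]
    · have hsw : Equiv.swap a b (y κ) ≠ b := by
        intro hcon
        apply hy
        have := (Equiv.swap a b).injective (hcon.trans (Equiv.swap_apply_left a b).symm)
        exact this
      rw [if_neg hy, if_neg hsw]
      simp
  calc ∑ y, ((if y κ = a then 1 else 0) * u y * f y
        - (if Equiv.swap a b (y κ) = b then 1 else 0) * u y * f (m y))
      ≤ ∑ y, (if y κ = a then 1 else 0) * u y * c κ :=
        Finset.sum_le_sum fun y _ => hbound y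
    _ = (∑ y, mcdW p ((κ : ℕ) + 1) (Function.update x κ a) y) * c κ := by
        rw [Finset.sum_mul]
        exact Finset.sum_congr rfl fun y _ => by rw [hsplit a y]
    _ = c κ := by rw [mcdW_sum p hp_sum, one_mul]



end McDiarmidAux

/-- McDiarmid's inequality on a product of finite probability spaces: if `f`
has the bounded differences property (changing the `i`-th coordinate changes
`f` by at most `c i`), then `Pr[f - E f ≥ z] ≤ exp (-2 z² / ∑ c i²)`. -/
theorem mcdiarmid_inequality {n : ℕ} (X : Fin n → Type*) [∀ i, Fintype (X i)]
    [∀ i, DecidableEq (X i)]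
    (p : ∀ i, X i → ℝ) (hp_nonneg : ∀ i a, 0 ≤ p i a)
    (hp_sum : ∀ i, ∑ a, p i a = 1)
    (f : (∀ j, X j) → ℝ)
    (c : Fin n → ℝ) (hc : ∀ i, 0 ≤ c i)
    (hbdd : ∀ (i : Fin n) (x : ∀ j, X j) (a : X i),
      |f (Function.update x i a) - f x| ≤ c i)
    (z : ℝ) (hz : 0 ≤ z) :
    ∑ x ∈ univ.filter (fun x : ∀ j, X j =>
        z ≤ f x - ∑ y : ∀ j, X j, (∏ i, p i (y i)) * f y),
      (∏ i, p i (x i)) ≤ Real.exp (-2 * z ^ 2 / ∑ i, (c i) ^ 2) := by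
  classical
  have hXne : ∀ i, Nonempty (X i) := by
    intro i
    rcases isEmpty_or_nonempty (X i) with h | h
    · exfalso
      have := hp_sum i
      rw [Finset.univ_eq_empty, Finset.sum_empty] at this
      norm_num at this
    · exact h
  have hPine : Nonempty (∀ j, X j) := ⟨fun j => Classical.arbitrary _⟩
  obtain ⟨x₀⟩ := hPine
  have hprod_nonneg : ∀ x : ∀ j, X j, (0:ℝ) ≤ ∏ i, p i (x i) :=
    fun x => Finset.prod_nonneg fun i _ => hp_nonneg i (x i)
  have hW0 : ∀ y : ∀ j, X j, mcdW p 0 x₀ y = ∏ i, p i (y i) := by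
    intro y
    unfold mcdW
    exact Finset.prod_congr rfl fun i _ => by rw [if_neg (Nat.not_lt_zero _)]
  have hsum1 : ∑ x : ∀ j, X j, ∏ i, p i (x i) = 1 := by
    rw [← mcdW_sum p hp_sum 0 x₀]
    exact Finset.sum_congr rfl fun y _ => (hW0 y).symm
  set S := ∑ i, (c i) ^ 2 with hS
  set μ := ∑ y : ∀ j, X j, (∏ i, p i (y i)) * f y with hμ
  by_cases hS0 : S = 0
  · rw [hS0, div_zero, Real.exp_zero]
    calc ∑ x ∈ univ.filter (fun x : ∀ j, X j => z ≤ f x - μ), (∏ i, p i (x i))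
        ≤ ∑ x : ∀ j, X j, ∏ i, p i (x i) :=
          Finset.sum_le_sum_of_subset_of_nonneg (Finset.filter_subset _ _)
            (fun x _ _ => hprod_nonneg x)
      _ = 1 := hsum1
  · have hSnonneg : (0:ℝ) ≤ S := Finset.sum_nonneg fun i _ => sq_nonneg _
    have hSpos : 0 < S := lt_of_le_of_ne hSnonneg (Ne.symm hS0)
    set t := 4 * z / S with ht
    have ht0 : 0 ≤ t := div_nonneg (by linarith) hSpos.le
    -- MGF bound by downward induction on the number of integrated-out coordinates
    have key : ∀ j : ℕ, ∀ x : ∀ j', X j',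
        ∑ y, mcdW p (n - j) x y * Real.exp (t * f y)
          ≤ Real.exp (t * (∑ y, mcdW p (n - j) x y * f y)
              + t ^ 2 * (∑ i ∈ Finset.univ.filter (fun i : Fin n => n - j ≤ (i : ℕ)), (c i) ^ 2) / 8) := by
      intro j
      induction j with
      | zero =>
        intro x
        rw [Nat.sub_zero, mcdW_top p n le_rfl x (fun y => Real.exp (t * f y)),
          mcdW_top p n le_rfl x f]
        have hfil : Finset.univ.filter (fun i : Fin n => n ≤ (i : ℕ)) = ∅ := by
          apply Finset.filter_false_of_mem
          intro i _
          exact not_le.mpr i.isLt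
        rw [hfil, Finset.sum_empty]
        norm_num
      | succ j ih =>
        intro x
        by_cases hj : n - j = 0
        · have h1 : n - (j + 1) = n - j := by omega
          rw [h1]; exact ih x
        · set k := n - (j + 1) with hk
          have hkn : k < n := by omega
          have hkj : n - j = k + 1 := by omega
          set κ : Fin n := ⟨k, hkn⟩ with hκ
          have hκval : (κ : ℕ) = k := rfl
          rw [hkj] at ih
          have hfil : Finset.univ.filter (fun i : Fin n => k ≤ (i : ℕ))
              = insert κ (Finset.univ.filter (fun i : Fin n => k + 1 ≤ (i : ℕ))) := by
            ext i
            simp only [Finset.mem_filter, Finset.mem_insert, Finset.mem_univ, true_and]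
            constructor
            · intro h
              rcases eq_or_lt_of_le h with h' | h'
              · left; exact Fin.ext h'.symm
              · right; omega
            · intro h
              rcases h with h | h
              · rw [h]
              · omega
          have hnotmem : κ ∉ Finset.univ.filter (fun i : Fin n => k + 1 ≤ (i : ℕ)) := by
            simp only [Finset.mem_filter, Finset.mem_univ, true_and, hκval]
            omega
          have hosc : ∀ a b : X κ,
              (∑ y, mcdW p (k + 1) (Function.update x κ a) y * f y)
                - (∑ y, mcdW p (k + 1) (Function.update x κ b) y * f y) ≤ c κ :=
            fun a b => mcd_osc p hp_nonneg hp_sum f c hbdd κ x a b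
          have hhoef := mcd_hoeffding (p κ) (hp_nonneg κ) (hp_sum κ)
            (fun a => ∑ y, mcdW p (k + 1) (Function.update x κ a) y * f y)
            (c κ) (hc κ) hosc t
          calc ∑ y, mcdW p k x y * Real.exp (t * f y)
              = ∑ a, p κ a * ∑ y, mcdW p (k + 1) (Function.update x κ a) y * Real.exp (t * f y) :=
                mcdW_succ p κ x (fun y => Real.exp (t * f y))
            _ ≤ ∑ a, p κ a * Real.exp (t * (∑ y, mcdW p (k + 1) (Function.update x κ a) y * f y)
                  + t ^ 2 * (∑ i ∈ Finset.univ.filter (fun i : Fin n => k + 1 ≤ (i : ℕ)), (c i) ^ 2) / 8) :=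
                Finset.sum_le_sum fun a _ =>
                  mul_le_mul_of_nonneg_left (ih (Function.update x κ a)) (hp_nonneg κ a)
            _ = (∑ a, p κ a * Real.exp (t * (∑ y, mcdW p (k + 1) (Function.update x κ a) y * f y)))
                  * Real.exp (t ^ 2 * (∑ i ∈ Finset.univ.filter (fun i : Fin n => k + 1 ≤ (i : ℕ)), (c i) ^ 2) / 8) := by
                rw [Finset.sum_mul]
                exact Finset.sum_congr rfl fun a _ => by rw [Real.exp_add]; ring
            _ ≤ Real.exp (t * (∑ a, p κ a * (∑ y, mcdW p (k + 1) (Function.update x κ a) y * f y))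
                  + t ^ 2 * (c κ) ^ 2 / 8)
                  * Real.exp (t ^ 2 * (∑ i ∈ Finset.univ.filter (fun i : Fin n => k + 1 ≤ (i : ℕ)), (c i) ^ 2) / 8) :=
                mul_le_mul_of_nonneg_right hhoef (Real.exp_pos _).le
            _ = Real.exp (t * (∑ y, mcdW p k x y * f y)
                  + t ^ 2 * (∑ i ∈ Finset.univ.filter (fun i : Fin n => k ≤ (i : ℕ)), (c i) ^ 2) / 8) := by
                rw [← Real.exp_add, ← mcdW_succ p κ x f, hfil, Finset.sum_insert hnotmem]
                congr 1
                ring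
    -- the MGF bound
    have mgf : ∑ y : ∀ j, X j, (∏ i, p i (y i)) * Real.exp (t * f y)
        ≤ Real.exp (t * μ + t ^ 2 * S / 8) := by
      have h := key n x₀
      rw [Nat.sub_self] at h
      have hfil : Finset.univ.filter (fun i : Fin n => 0 ≤ (i : ℕ)) = Finset.univ :=
        Finset.filter_true_of_mem fun i _ => Nat.zero_le _
      rw [hfil] at h
      have e1 : ∑ y : ∀ j, X j, (∏ i, p i (y i)) * Real.exp (t * f y)
          = ∑ y, mcdW p 0 x₀ y * Real.exp (t * f y) :=
        Finset.sum_congr rfl fun y _ => by rw [hW0 y]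
      have e2 : (∑ y, mcdW p 0 x₀ y * f y) = μ := by
        rw [hμ]
        exact Finset.sum_congr rfl fun y _ => by rw [hW0 y]
      rw [e1]
      calc ∑ y, mcdW p 0 x₀ y * Real.exp (t * f y)
          ≤ Real.exp (t * (∑ y, mcdW p 0 x₀ y * f y) + t ^ 2 * (∑ i, (c i) ^ 2) / 8) := h
        _ = Real.exp (t * μ + t ^ 2 * S / 8) := by rw [e2, ← hS]
    -- Chernoff
    calc ∑ x ∈ univ.filter (fun x : ∀ j, X j => z ≤ f x - μ), (∏ i, p i (x i))
        ≤ ∑ x ∈ univ.filter (fun x : ∀ j, X j => z ≤ f x - μ),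
            (∏ i, p i (x i)) * Real.exp (t * (f x - μ - z)) := by
          apply Finset.sum_le_sum
          intro x hx
          rw [Finset.mem_filter] at hx
          have h1 : (1:ℝ) ≤ Real.exp (t * (f x - μ - z)) := by
            apply Real.one_le_exp
            have h2 : 0 ≤ f x - μ - z := by linarith [hx.2]
            exact mul_nonneg ht0 h2
          exact le_mul_of_one_le_right (hprod_nonneg x) h1
      _ ≤ ∑ x : ∀ j, X j, (∏ i, p i (x i)) * Real.exp (t * (f x - μ - z)) :=
          Finset.sum_le_sum_of_subset_of_nonneg (Finset.filter_subset _ _)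
            (fun x _ _ => mul_nonneg (hprod_nonneg x) (Real.exp_pos _).le)
      _ = (∑ x : ∀ j, X j, (∏ i, p i (x i)) * Real.exp (t * f x)) * Real.exp (-(t * μ) - t * z) := by
          rw [Finset.sum_mul]
          apply Finset.sum_congr rfl
          intro x _
          rw [mul_assoc, ← Real.exp_add]
          have e3 : t * (f x - μ - z) = t * f x + (-(t * μ) - t * z) := by ring
          rw [e3]
      _ ≤ Real.exp (t * μ + t ^ 2 * S / 8) * Real.exp (-(t * μ) - t * z) :=
          mul_le_mul_of_nonneg_right mgf (Real.exp_pos _).le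
      _ = Real.exp (t ^ 2 * S / 8 - t * z) := by rw [← Real.exp_add]; congr 1; ring
      _ = Real.exp (-2 * z ^ 2 / S) := by
          congr 1
          rw [ht]
          field_simp
          ring
end

section
/- Let μ be a product probability measure on X = X₁ × … × X_n (finite probability spaces) and let d denote Hamming distance (number of differing coordinates). For any nonempty subsets B, B' ⊆ X, the Hamming distance between B and B' satisfies d(B,B') ≤ √((n/2)·ln(1/μ(B))) + √((n/2)·ln(1/μ(B'))). -/
open Finset Function

lemma bul_hoeffding_pointwise {p : ℝ} (hp0 : 0 ≤ p) (hp1 : p ≤ 1) (t : ℝ) :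
    1 - p + p * Real.exp t ≤ Real.exp (p * t + t ^ 2 / 8) := by
  set g : ℝ → ℝ := fun u => 1 - p + p * Real.exp u with hgdef
  have hgpos : ∀ u, 0 < g u := by
    intro u
    rcases lt_or_eq_of_le hp0 with h | h
    · have h1 : 0 < p * Real.exp u := by positivity
      have : (0:ℝ) ≤ 1 - p := by linarith
      simp only [hgdef]; linarith
    · simp [hgdef, ← h]
  set q : ℝ → ℝ := fun u => p * Real.exp u / g u with hqdef
  have hgd : ∀ u, HasDerivAt g (p * Real.exp u) u := by
    intro u
    exact ((Real.hasDerivAt_exp u).const_mul p).const_add (1 - p)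
  have hq0 : ∀ u, 0 ≤ q u := by
    intro u
    exact div_nonneg (by positivity) (hgpos u).le
  have hq1 : ∀ u, q u ≤ 1 := by
    intro u
    rw [hqdef, div_le_one (hgpos u)]
    simp only [hgdef]
    nlinarith [Real.exp_pos u, hp1]
  have hqd : ∀ u, HasDerivAt q (q u * (1 - q u)) u := by
    intro u
    have h := ((Real.hasDerivAt_exp u).const_mul p).div (hgd u) (hgpos u).ne'
    refine h.congr_deriv ?_
    have key : ∀ G : ℝ, 0 < G → p * Real.exp u / G * (1 - p * Real.exp u / G) =
        (p * Real.exp u * G - p * Real.exp u * (p * Real.exp u)) / G ^ 2 := by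
      intro G hG; field_simp
    simpa only [hqdef] using (key (g u) (hgpos u)).symm
  have hqlip : ∀ u : ℝ, |q u - p| ≤ (1/4) * |u| := by
    intro u
    have key := Convex.norm_image_sub_le_of_norm_hasDerivWithin_le
      (f := q) (f' := fun u => q u * (1 - q u)) (s := Set.univ) (C := 1/4)
      (fun x _ => (hqd x).hasDerivWithinAt)
      (fun x _ => by
        have h1 := hq0 x; have h2 := hq1 x
        have : ‖q x * (1 - q x)‖ ≤ 1/4 := by
          rw [Real.norm_eq_abs, abs_of_nonneg (mul_nonneg h1 (by linarith))]
          nlinarith [sq_nonneg (q x - 1/2)]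
        exact this)
      convex_univ (Set.mem_univ 0) (Set.mem_univ u)
    have hq00 : q 0 = p := by
      simp only [hqdef, hgdef, Real.exp_zero, mul_one]
      have : 1 - p + p = 1 := by ring
      rw [this, div_one]
    simpa [Real.norm_eq_abs, hq00] using key
  set h : ℝ → ℝ := fun u => Real.log (g u) - p * u - u ^ 2 / 8 with hhdef
  have hhd : ∀ u, HasDerivAt h (q u - p - u / 4) u := by
    intro u
    have h1 : HasDerivAt (fun u => Real.log (g u)) (p * Real.exp u / g u) u :=
      (hgd u).log (hgpos u).ne'
    have h2 : HasDerivAt (fun u : ℝ => p * u) p u := by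
      simpa using (hasDerivAt_id u).const_mul p
    have h3 : HasDerivAt (fun u : ℝ => u ^ 2 / 8) (u / 4) u := by
      have := (hasDerivAt_pow 2 u).div_const 8
      refine this.congr_deriv ?_
      push_cast; ring
    rw [show q u = p * Real.exp u / g u from rfl]; exact (h1.sub h2).sub h3
  have hh0 : h 0 = 0 := by
    simp [hhdef, hgdef]
  have hkey : ∀ u : ℝ, h u ≤ 0 := by
    intro u
    have hdiff : Differentiable ℝ h := fun x => (hhd x).differentiableAt
    rcases le_or_gt 0 u with hu | hu
    · have anti : AntitoneOn h (Set.Ici 0) := by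
        apply antitoneOn_of_deriv_nonpos (convex_Ici 0) hdiff.continuous.continuousOn
          hdiff.differentiableOn
        intro x hx
        rw [interior_Ici] at hx
        rw [(hhd x).deriv]
        have := hqlip x
        have hxpos : (0:ℝ) < x := hx
        rw [abs_of_pos hxpos] at this
        have : q x - p ≤ x / 4 := by cases abs_le.mp this; linarith
        linarith
      have := anti (Set.mem_Ici.mpr le_rfl) (Set.mem_Ici.mpr hu) hu
      linarith [hh0 ▸ this]
    · have mono : MonotoneOn h (Set.Iic 0) := by
        apply monotoneOn_of_deriv_nonneg (convex_Iic 0) hdiff.continuous.continuousOn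
          hdiff.differentiableOn
        intro x hx
        rw [interior_Iic] at hx
        rw [(hhd x).deriv]
        have := hqlip x
        have hxneg : x < 0 := hx
        rw [abs_of_neg hxneg] at this
        have : x / 4 ≤ q x - p := by cases abs_le.mp this; linarith
        linarith
      have := mono (Set.mem_Iic.mpr hu.le) (Set.mem_Iic.mpr le_rfl) hu.le
      linarith [hh0 ▸ this]
  have := hkey t
  have hlog : Real.log (g t) ≤ p * t + t ^ 2 / 8 := by
    simp only [hhdef] at this; linarith
  calc 1 - p + p * Real.exp t = g t := rfl
    _ = Real.exp (Real.log (g t)) := (Real.exp_log (hgpos t)).symm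
    _ ≤ Real.exp (p * t + t ^ 2 / 8) := Real.exp_le_exp.mpr hlog
lemma bul_hoeffding_finset {α : Type*} [Fintype α] (w : α → ℝ) (hw : ∀ a, 0 ≤ w a)
    (hsum : ∑ a, w a = 1) (g : α → ℝ) (c : ℝ) (hgl : ∀ a, c ≤ g a) (hgu : ∀ a, g a ≤ c + 1)
    (t : ℝ) :
    ∑ a, w a * Real.exp (t * g a) ≤ Real.exp (t * (∑ a, w a * g a) + t ^ 2 / 8) := by
  set S : ℝ := ∑ a, w a * (g a - c) with hSdef
  have hS0 : 0 ≤ S := sum_nonneg fun a _ => mul_nonneg (hw a) (by linarith [hgl a])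
  have hS1 : S ≤ 1 := by
    calc S ≤ ∑ a, w a := sum_le_sum fun a _ =>
          (mul_le_of_le_one_right (hw a) (by linarith [hgu a]))
      _ = 1 := hsum
  have hSm : S = (∑ a, w a * g a) - c := by
    rw [hSdef]
    simp only [mul_sub]
    rw [Finset.sum_sub_distrib, ← Finset.sum_mul, hsum, one_mul]
  have step1 : ∀ a, Real.exp (t * g a) ≤
      Real.exp (t * c) * (1 - (g a - c) + (g a - c) * Real.exp t) := by
    intro a
    set s := g a - c with hs
    have hs0 : 0 ≤ s := by simp [hs]; linarith [hgl a]
    have hs1 : s ≤ 1 := by simp [hs]; linarith [hgu a]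
    have hconv : Real.exp (t * s) ≤ (1 - s) + s * Real.exp t := by
      have := convexOn_exp.2 (Set.mem_univ (0:ℝ)) (Set.mem_univ t) (by linarith : (0:ℝ) ≤ 1 - s)
        hs0 (by ring)
      simpa [smul_eq_mul, mul_comm] using this
    calc Real.exp (t * g a) = Real.exp (t * c) * Real.exp (t * s) := by
          rw [← Real.exp_add]; congr 1; simp [hs]; ring
      _ ≤ Real.exp (t * c) * ((1 - s) + s * Real.exp t) := by
          apply mul_le_mul_of_nonneg_left hconv (Real.exp_pos _).le
      _ = Real.exp (t * c) * (1 - s + s * Real.exp t) := by ring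
  calc ∑ a, w a * Real.exp (t * g a)
      ≤ ∑ a, w a * (Real.exp (t * c) * (1 - (g a - c) + (g a - c) * Real.exp t)) :=
        sum_le_sum fun a _ => mul_le_mul_of_nonneg_left (step1 a) (hw a)
    _ = Real.exp (t * c) * (1 - S + S * Real.exp t) := by
        calc ∑ a, w a * (Real.exp (t * c) * (1 - (g a - c) + (g a - c) * Real.exp t))
            = Real.exp (t * c) *
              ∑ a, (w a - w a * (g a - c) + w a * (g a - c) * Real.exp t) := by
              rw [Finset.mul_sum]; exact sum_congr rfl fun a _ => by ring
          _ = Real.exp (t * c) * (1 - S + S * Real.exp t) := by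
              rw [Finset.sum_add_distrib, Finset.sum_sub_distrib, ← Finset.sum_mul, hsum, hSdef]
    _ ≤ Real.exp (t * c) * Real.exp (S * t + t ^ 2 / 8) :=
        mul_le_mul_of_nonneg_left (bul_hoeffding_pointwise hS0 hS1 t) (Real.exp_pos _).le
    _ = Real.exp (t * (∑ a, w a * g a) + t ^ 2 / 8) := by
        rw [← Real.exp_add]; congr 1; rw [hSm]; ring
section
set_option linter.unusedSectionVars false
variable {n : ℕ} {X : Fin n → Type*} [∀ i, Fintype (X i)] [∀ i, DecidableEq (X i)]
variable (p : ∀ i, X i → ℝ)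

/-- Weight forcing coordinates outside `s` to agree with `x`. -/
def bulWt (s : Finset (Fin n)) (x y : ∀ i, X i) : ℝ :=
  ∏ i, if i ∈ s then p i (y i) else (if y i = x i then 1 else 0)

/-- Conditional expectation over the coordinates in `s`. -/
def bulEw (s : Finset (Fin n)) (f : (∀ i, X i) → ℝ) (x : ∀ i, X i) : ℝ :=
  ∑ y, bulWt p s x y * f y

lemma bulWt_nonneg (hp : ∀ i a, 0 ≤ p i a) (s : Finset (Fin n)) (x y : ∀ i, X i) :
    0 ≤ bulWt p s x y := by
  apply Finset.prod_nonneg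
  intro i _
  split_ifs <;> first | exact hp i _ | norm_num

lemma bulEw_empty (f : (∀ i, X i) → ℝ) (x : ∀ i, X i) : bulEw p ∅ f x = f x := by
  have hW : ∀ y, bulWt p ∅ x y = if y = x then 1 else 0 := by
    intro y
    by_cases hyx : y = x
    · subst hyx
      simp [bulWt]
    · rw [if_neg hyx]
      obtain ⟨i, hi⟩ : ∃ i, y i ≠ x i := by
        by_contra hcon
        push_neg at hcon
        exact hyx (funext hcon)
      exact Finset.prod_eq_zero (mem_univ i) (by simp [hi])
  simp only [bulEw, hW, ite_mul, one_mul, zero_mul]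
  simp

lemma bulEw_insert {i : Fin n} {s : Finset (Fin n)} (hi : i ∉ s) (f : (∀ i, X i) → ℝ)
    (x : ∀ i, X i) :
    bulEw p (insert i s) f x = ∑ a, p i a * bulEw p s f (Function.update x i a) := by
  simp only [bulEw, Finset.mul_sum]
  rw [Finset.sum_comm]
  apply Finset.sum_congr rfl
  intro y _
  set C := ∏ j ∈ univ.erase i, (if j ∈ s then p j (y j) else if y j = x j then 1 else 0)
    with hCdef
  have hsplit : ∀ (F : Fin n → ℝ), ∏ j, F j = F i * ∏ j ∈ univ.erase i, F j :=
    fun F => (Finset.mul_prod_erase univ F (mem_univ i)).symm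
  have hWa : ∀ a : X i, bulWt p s (Function.update x i a) y = (if y i = a then 1 else 0) * C := by
    intro a
    rw [bulWt, hsplit]
    congr 1
    · simp [hi]
    · rw [hCdef]
      apply Finset.prod_congr rfl
      intro j hj
      rw [Function.update_of_ne (Finset.ne_of_mem_erase hj)]
  have hWins : bulWt p (insert i s) x y = p i (y i) * C := by
    rw [bulWt, hsplit]
    congr 1
    · simp
    · rw [hCdef]
      apply Finset.prod_congr rfl
      intro j hj
      have hji := Finset.ne_of_mem_erase hj
      simp [Finset.mem_insert, hji]
  rw [hWins, Finset.sum_congr rfl (fun a (_ : a ∈ univ) => by rw [hWa a])]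
  simp only [ite_mul, one_mul, zero_mul, mul_ite, mul_zero]
  rw [Finset.sum_ite_eq]
  simp [mul_assoc]

lemma bulEw_const (hp_sum : ∀ i, ∑ a, p i a = 1) (s : Finset (Fin n)) (c : ℝ) :
    ∀ x, bulEw p s (fun _ => c) x = c := by
  induction s using Finset.induction_on with
  | empty => intro x; rw [bulEw_empty]
  | @insert _ _ hi ih =>
    intro x
    rw [bulEw_insert p hi]
    simp only [ih]
    rw [← Finset.sum_mul, hp_sum, one_mul]

lemma bulEw_lipschitz (hp_nonneg : ∀ i a, 0 ≤ p i a) (hp_sum : ∀ i, ∑ a, p i a = 1)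
    (f : (∀ i, X i) → ℝ) (i : Fin n)
    (hf : ∀ z a b, |f (Function.update z i a) - f (Function.update z i b)| ≤ 1)
    (s : Finset (Fin n)) :
    i ∉ s → ∀ x a b,
      |bulEw p s f (Function.update x i a) - bulEw p s f (Function.update x i b)| ≤ 1 := by
  induction s using Finset.induction_on with
  | empty =>
    intro _ x a b
    rw [bulEw_empty, bulEw_empty]
    exact hf x a b
  | @insert j s hj ih =>
    intro hins x a b
    have hij : i ≠ j := fun h => hins (h ▸ Finset.mem_insert_self i s)
    have his : i ∉ s := fun h => hins (Finset.mem_insert_of_mem h)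
    rw [bulEw_insert p hj, bulEw_insert p hj]
    rw [← Finset.sum_sub_distrib]
    calc |∑ c, (p j c * bulEw p s f (Function.update (Function.update x i a) j c) -
            p j c * bulEw p s f (Function.update (Function.update x i b) j c))|
        ≤ ∑ c, |p j c * bulEw p s f (Function.update (Function.update x i a) j c) -
            p j c * bulEw p s f (Function.update (Function.update x i b) j c)| :=
          Finset.abs_sum_le_sum_abs _ _
      _ ≤ ∑ c, p j c := by
          apply Finset.sum_le_sum
          intro c _
          rw [← mul_sub, abs_mul, abs_of_nonneg (hp_nonneg j c)]
          have hcomm : ∀ v : X i, Function.update (Function.update x i v) j c =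
              Function.update (Function.update x j c) i v := fun v =>
            Function.update_comm hij v c x
          rw [hcomm a, hcomm b]
          calc p j c * |bulEw p s f (Function.update (Function.update x j c) i a) -
                bulEw p s f (Function.update (Function.update x j c) i b)|
              ≤ p j c * 1 := mul_le_mul_of_nonneg_left (ih his (Function.update x j c) a b)
                (hp_nonneg j c)
            _ = p j c := mul_one _
      _ = 1 := hp_sum j

lemma bulEw_exp_le [∀ i, Nonempty (X i)] (hp_nonneg : ∀ i a, 0 ≤ p i a)
    (hp_sum : ∀ i, ∑ a, p i a = 1) (f : (∀ i, X i) → ℝ)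
    (hf : ∀ i z a b, |f (Function.update z i a) - f (Function.update z i b)| ≤ 1) (t : ℝ)
    (s : Finset (Fin n)) :
    ∀ x, bulEw p s (fun y => Real.exp (t * f y)) x ≤
      Real.exp (t * bulEw p s f x + s.card * t ^ 2 / 8) := by
  induction s using Finset.induction_on with
  | empty =>
    intro x
    rw [bulEw_empty, bulEw_empty]
    simp
  | @insert i s hi ih =>
    intro x
    rw [bulEw_insert p hi, bulEw_insert p hi]
    set g : X i → ℝ := fun a => bulEw p s f (Function.update x i a) with hgdef
    set c : ℝ := univ.inf' univ_nonempty g with hcdef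
    obtain ⟨a₀, _, hca⟩ := Finset.exists_mem_eq_inf' univ_nonempty g
    have hgl : ∀ a, c ≤ g a := fun a => by
      rw [hcdef]; exact Finset.inf'_le g (mem_univ a)
    have hc0 : c = g a₀ := by rw [hcdef, hca]
    have hgu : ∀ a, g a ≤ c + 1 := by
      intro a
      have habs : |g a - g a₀| ≤ 1 :=
        bulEw_lipschitz p hp_nonneg hp_sum f i (hf i) s hi x a a₀
      rw [hc0]
      linarith [(abs_le.mp habs).2]
    calc ∑ a, p i a * bulEw p s (fun y => Real.exp (t * f y)) (Function.update x i a)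
        ≤ ∑ a, p i a * Real.exp (t * g a + s.card * t ^ 2 / 8) :=
          Finset.sum_le_sum fun a _ => mul_le_mul_of_nonneg_left
            (ih (Function.update x i a)) (hp_nonneg i a)
      _ = Real.exp (s.card * t ^ 2 / 8) * ∑ a, p i a * Real.exp (t * g a) := by
          rw [Finset.mul_sum]
          apply Finset.sum_congr rfl
          intro a _
          rw [Real.exp_add]
          ring
      _ ≤ Real.exp (s.card * t ^ 2 / 8) *
            Real.exp (t * (∑ a, p i a * g a) + t ^ 2 / 8) :=
          mul_le_mul_of_nonneg_left
            (bul_hoeffding_finset (p i) (hp_nonneg i) (hp_sum i) g c hgl hgu t)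
            (Real.exp_pos _).le
      _ = Real.exp (t * (∑ a, p i a * g a) + (insert i s).card * t ^ 2 / 8) := by
          rw [← Real.exp_add, Finset.card_insert_of_notMem hi]
          push_cast
          ring_nf
      _ = Real.exp (t * (∑ a, p i a * bulEw p s f (Function.update x i a)) +
            (insert i s).card * t ^ 2 / 8) := rfl
end

/-- Blowing-up lemma, symmetric version: on a product of finite probability
spaces, any two sets of positive measure are at Hamming distance at most
`√((n/2)·ln(1/μ B)) + √((n/2)·ln(1/μ B'))`. -/
theorem blowing_up_symmetric {n : ℕ} (X : Fin n → Type*) [∀ i, Fintype (X i)]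
    [∀ i, DecidableEq (X i)]
    (p : ∀ i, X i → ℝ) (hp_nonneg : ∀ i a, 0 ≤ p i a)
    (hp_sum : ∀ i, ∑ a, p i a = 1)
    (B B' : Finset (∀ j, X j)) (hB : B.Nonempty) (hB' : B'.Nonempty)
    (μB μB' : ℝ)
    (hμB : μB = ∑ x ∈ B, ∏ i, p i (x i))
    (hμB' : μB' = ∑ x ∈ B', ∏ i, p i (x i))
    (hμBpos : 0 < μB) (hμB'pos : 0 < μB') :
    ∃ x ∈ B, ∃ y ∈ B',
      ((univ.filter (fun i : Fin n => x i ≠ y i)).card : ℝ) ≤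
        Real.sqrt ((n / 2) * Real.log (1 / μB)) +
        Real.sqrt ((n / 2) * Real.log (1 / μB')) := by
  classical
  by_cases hn : n = 0
  · subst hn
    obtain ⟨x, hx⟩ := hB
    obtain ⟨y, hy⟩ := hB'
    refine ⟨x, hx, y, hy, ?_⟩
    have hemp : (univ.filter (fun i : Fin 0 => x i ≠ y i)) = ∅ := by simp
    rw [hemp]
    simpa using add_nonneg (Real.sqrt_nonneg _) (Real.sqrt_nonneg _)
  · have hnR : ((n:ℝ)) ≠ 0 := Nat.cast_ne_zero.mpr hn
    have hnpos : (0:ℝ) < n := by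
      have := Nat.pos_of_ne_zero hn
      exact_mod_cast this
    obtain ⟨xB, hxB⟩ := id hB
    haveI : ∀ i, Nonempty (X i) := fun i => ⟨xB i⟩
    set w : (∀ i, X i) → ℝ := fun y => ∏ i, p i (y i) with hwdef
    have hw_nonneg : ∀ y, 0 ≤ w y := fun y =>
      Finset.prod_nonneg fun i _ => hp_nonneg i (y i)
    have hWuniv : ∀ (f : (∀ i, X i) → ℝ) x, bulEw p univ f x = ∑ y, w y * f y := by
      intro f x
      simp [bulEw, bulWt, hwdef]
    have hw_sum : ∑ y, w y = 1 := by
      have h1 := bulEw_const p hp_sum univ (1:ℝ) xB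
      rw [hWuniv] at h1
      simpa using h1
    -- the key one-sided estimate
    have key : ∀ (C : Finset (∀ j, X j)) (hC : C.Nonempty) (μC : ℝ),
        μC = ∑ x ∈ C, ∏ i, p i (x i) → 0 < μC →
        ∑ y, w y * ((C.inf' hC fun z => hammingDist y z : ℕ) : ℝ) ≤
          Real.sqrt ((n / 2) * Real.log (1 / μC)) := by
      intro C hC μC hμC hpos
      set f : (∀ i, X i) → ℝ := fun y => ((C.inf' hC fun z => hammingDist y z : ℕ) : ℝ)
        with hfdef
      have hud : ∀ (z : ∀ i, X i) (i : Fin n) (a b : X i),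
          hammingDist (Function.update z i a) (Function.update z i b) ≤ 1 := by
        intro z i a b
        have hsub : (univ.filter fun j =>
            Function.update z i a j ≠ Function.update z i b j) ⊆ {i} := by
          intro j hj
          rw [Finset.mem_filter] at hj
          rw [Finset.mem_singleton]
          by_contra hji
          exact hj.2 (by rw [Function.update_of_ne hji, Function.update_of_ne hji])
        calc hammingDist (Function.update z i a) (Function.update z i b)
            = (univ.filter fun j =>
                Function.update z i a j ≠ Function.update z i b j).card := rfl
          _ ≤ ({i} : Finset (Fin n)).card := Finset.card_le_card hsub
          _ = 1 := Finset.card_singleton i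
      have hmono : ∀ (u v : ∀ i, X i), hammingDist u v ≤ 1 →
          (C.inf' hC fun z => hammingDist u z) ≤ (C.inf' hC fun z => hammingDist v z) + 1 := by
        intro u v huv
        obtain ⟨z₀, hz₀, hz₀eq⟩ := Finset.exists_mem_eq_inf' hC (fun z => hammingDist v z)
        calc (C.inf' hC fun z => hammingDist u z) ≤ hammingDist u z₀ :=
              Finset.inf'_le _ hz₀
          _ ≤ hammingDist u v + hammingDist v z₀ := hammingDist_triangle u v z₀
          _ ≤ 1 + hammingDist v z₀ := Nat.add_le_add_right huv _
          _ = (C.inf' hC fun z => hammingDist v z) + 1 := by rw [← hz₀eq]; ring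
      have hflip : ∀ (i : Fin n) (z : ∀ i, X i) (a b : X i),
          |f (Function.update z i a) - f (Function.update z i b)| ≤ 1 := by
        intro i z a b
        have h1 := hmono (Function.update z i a) (Function.update z i b) (hud z i a b)
        have h2 := hmono (Function.update z i b) (Function.update z i a) (by
          rw [hammingDist_comm]; exact hud z i a b)
        rw [abs_le]
        constructor
        · have hc := (Nat.cast_le (α := ℝ)).mpr h2
          rw [Nat.cast_add, Nat.cast_one] at hc
          simp only [hfdef]
          linarith
        · have hc := (Nat.cast_le (α := ℝ)).mpr h1
          rw [Nat.cast_add, Nat.cast_one] at hc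
          simp only [hfdef]
          linarith
      set m : ℝ := ∑ y, w y * f y with hmdef
      have hm0 : 0 ≤ m :=
        Finset.sum_nonneg fun y _ => mul_nonneg (hw_nonneg y) (Nat.cast_nonneg _)
      set t : ℝ := -(4 * m / n) with htdef
      have hexp := bulEw_exp_le p hp_nonneg hp_sum f hflip t univ xB
      rw [hWuniv, hWuniv] at hexp
      have hcard : ((univ : Finset (Fin n)).card : ℝ) = n := by simp
      rw [hcard] at hexp
      -- μC ≤ LHS of hexp
      have hf0 : ∀ x ∈ C, f x = 0 := by
        intro x hx
        have hle : (C.inf' hC fun z => hammingDist x z) ≤ 0 := by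
          have := Finset.inf'_le (fun z => hammingDist x z) hx
          simpa using this
        simp only [hfdef]
        have : (C.inf' hC fun z => hammingDist x z) = 0 := Nat.le_zero.mp hle
        rw [this]
        norm_num
      have hμle : μC ≤ ∑ y, w y * Real.exp (t * f y) := by
        rw [hμC]
        calc ∑ x ∈ C, ∏ i, p i (x i) = ∑ x ∈ C, w x * Real.exp (t * f x) := by
              apply Finset.sum_congr rfl
              intro x hx
              rw [hf0 x hx]
              simp [hwdef]
          _ ≤ ∑ y, w y * Real.exp (t * f y) :=
              Finset.sum_le_sum_of_subset_of_nonneg (Finset.subset_univ C)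
                (fun y _ _ => mul_nonneg (hw_nonneg y) (Real.exp_pos _).le)
      have hchain : μC ≤ Real.exp (t * m + n * t ^ 2 / 8) := le_trans hμle hexp
      have hlog : Real.log μC ≤ t * m + n * t ^ 2 / 8 :=
        (Real.log_le_iff_le_exp hpos).mpr hchain
      have hval : t * m + n * t ^ 2 / 8 = -(2 * m ^ 2 / n) := by
        rw [htdef]
        field_simp
        ring
      rw [hval] at hlog
      have hloginv : 2 * m ^ 2 / n ≤ Real.log (1 / μC) := by
        rw [one_div, Real.log_inv]
        linarith
      have hsq : m ^ 2 ≤ (n / 2) * Real.log (1 / μC) := by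
        have := mul_le_mul_of_nonneg_left hloginv (by linarith : (0:ℝ) ≤ n / 2)
        calc m ^ 2 = (n / 2) * (2 * m ^ 2 / n) := by field_simp
          _ ≤ (n / 2) * Real.log (1 / μC) := this
      have hrhs0 : 0 ≤ (n / 2) * Real.log (1 / μC) := le_trans (sq_nonneg m) hsq
      exact (Real.le_sqrt hm0 hrhs0).mpr hsq
    -- apply to B and B'
    set fB : (∀ i, X i) → ℝ := fun y => ((B.inf' hB fun z => hammingDist y z : ℕ) : ℝ)
    set fB' : (∀ i, X i) → ℝ := fun y => ((B'.inf' hB' fun z => hammingDist y z : ℕ) : ℝ)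
    have hmB := key B hB μB hμB hμBpos
    have hmB' := key B' hB' μB' hμB' hμB'pos
    set mB : ℝ := ∑ y, w y * fB y
    set mB' : ℝ := ∑ y, w y * fB' y
    -- find a good point
    obtain ⟨y₁, hy₁⟩ : ∃ y, w y ≠ 0 := by
      by_contra hcon
      push_neg at hcon
      rw [Finset.sum_eq_zero (fun y _ => hcon y)] at hw_sum
      norm_num at hw_sum
    obtain ⟨y₀, hy₀ne, hy₀le⟩ : ∃ y, w y ≠ 0 ∧ fB y + fB' y ≤ mB + mB' := by
      by_contra hcon
      push_neg at hcon
      have hlt : ∑ y, w y * (mB + mB') < ∑ y, w y * (fB y + fB' y) := by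
        apply Finset.sum_lt_sum
        · intro y _
          rcases eq_or_ne (w y) 0 with h | h
          · simp [h]
          · exact mul_le_mul_of_nonneg_left (hcon y h).le (hw_nonneg y)
        · exact ⟨y₁, Finset.mem_univ y₁, mul_lt_mul_of_pos_left (hcon y₁ hy₁)
            (lt_of_le_of_ne (hw_nonneg y₁) (Ne.symm hy₁))⟩
      have he1 : ∑ y, w y * (mB + mB') = mB + mB' := by
        rw [← Finset.sum_mul, hw_sum, one_mul]
      have he2 : ∑ y, w y * (fB y + fB' y) = mB + mB' := by
        simp only [mul_add]
        rw [Finset.sum_add_distrib]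
      rw [he1, he2] at hlt
      exact lt_irrefl _ hlt
    obtain ⟨zB, hzB, hzBeq⟩ := Finset.exists_mem_eq_inf' hB (fun z => hammingDist y₀ z)
    obtain ⟨zB', hzB', hzB'eq⟩ := Finset.exists_mem_eq_inf' hB' (fun z => hammingDist y₀ z)
    refine ⟨zB, hzB, zB', hzB', ?_⟩
    have hid : (univ.filter (fun i : Fin n => zB i ≠ zB' i)).card = hammingDist zB zB' := rfl
    rw [hid]
    have htri : (hammingDist zB zB' : ℝ) ≤ fB y₀ + fB' y₀ := by
      have h1 : hammingDist zB zB' ≤ hammingDist y₀ zB + hammingDist y₀ zB' := by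
        calc hammingDist zB zB' ≤ hammingDist zB y₀ + hammingDist y₀ zB' :=
              hammingDist_triangle zB y₀ zB'
          _ = hammingDist y₀ zB + hammingDist y₀ zB' := by rw [hammingDist_comm]
      have : (hammingDist zB zB' : ℝ) ≤
          ((hammingDist y₀ zB : ℕ) : ℝ) + ((hammingDist y₀ zB' : ℕ) : ℝ) := by
        exact_mod_cast h1
      simpa [fB, fB', ← hzBeq, ← hzB'eq] using this
    calc (hammingDist zB zB' : ℝ) ≤ fB y₀ + fB' y₀ := htri
      _ ≤ mB + mB' := hy₀le
      _ ≤ Real.sqrt ((n / 2) * Real.log (1 / μB)) +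
          Real.sqrt ((n / 2) * Real.log (1 / μB')) := add_le_add hmB hmB'
end

section
/- Let μ be a product probability measure on {0,1}^n with independent coordinates, and let B ⊆ {0,1}^n satisfy μ(B) ≥ 1/n. Then there is a constant C such that for d = C·√(n·log n), the Hamming d-neighborhood B_d = {x : ∃ y ∈ B with Hamming distance ≤ d} satisfies μ(B_d) ≥ 1 - 1/n. -/
open Finset

namespace BlowUpAux

/-- Product Bernoulli weight on the cube. -/
def wt {n : ℕ} (p : Fin n → ℝ) (x : Fin n → Bool) : ℝ :=
  ∏ i, (if x i then p i else 1 - p i)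

lemma wt_nonneg {n : ℕ} {p : Fin n → ℝ} (hp0 : ∀ i, 0 ≤ p i) (hp1 : ∀ i, p i ≤ 1)
    (x : Fin n → Bool) : 0 ≤ wt p x := by
  refine Finset.prod_nonneg fun i _ => ?_
  split <;> [exact hp0 i; linarith [hp1 i]]

lemma wt_sum_one {n : ℕ} (p : Fin n → ℝ) : ∑ x : Fin n → Bool, wt p x = 1 := by
  unfold wt
  rw [← Fintype.prod_sum (fun (i : Fin n) (b : Bool) => if b then p i else 1 - p i)]
  simp

/-- convexity chord bound for exp on [-t, t]. -/
lemma chord (t y : ℝ) (hy : |y| ≤ 1) :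
    Real.exp (t * y) ≤ (1 - y) / 2 * Real.exp (-t) + (1 + y) / 2 * Real.exp t := by
  rw [abs_le] at hy
  have h := convexOn_exp.2 (Set.mem_univ (-t)) (Set.mem_univ t)
    (show (0:ℝ) ≤ (1 - y) / 2 by linarith) (show (0:ℝ) ≤ (1 + y) / 2 by linarith)
    (show (1 - y) / 2 + (1 + y) / 2 = 1 by ring)
  simp only [smul_eq_mul] at h
  have harg : (1 - y) / 2 * (-t) + (1 + y) / 2 * t = t * y := by ring
  rwa [harg] at h

/-- Two point mgf bound. -/
lemma two_point (t q a b : ℝ) (hq0 : 0 ≤ q) (hq1 : q ≤ 1) (hab : |b - a| ≤ 1) :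
    q * Real.exp (t * (b - (q * b + (1 - q) * a))) +
      (1 - q) * Real.exp (t * (a - (q * b + (1 - q) * a))) ≤ Real.exp (t ^ 2 / 2) := by
  rw [abs_le] at hab
  have hy1 : |b - (q * b + (1 - q) * a)| ≤ 1 := by
    rw [abs_le]; constructor <;> nlinarith
  have hy2 : |a - (q * b + (1 - q) * a)| ≤ 1 := by
    rw [abs_le]; constructor <;> nlinarith
  have c1 := chord t _ hy1
  have c2 := chord t _ hy2
  have hcosh : Real.cosh t ≤ Real.exp (t ^ 2 / 2) := Real.cosh_le_exp_half_sq t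
  rw [Real.cosh_eq] at hcosh
  calc q * Real.exp (t * (b - (q * b + (1 - q) * a))) +
      (1 - q) * Real.exp (t * (a - (q * b + (1 - q) * a)))
      ≤ q * ((1 - (b - (q * b + (1 - q) * a))) / 2 * Real.exp (-t) +
          (1 + (b - (q * b + (1 - q) * a))) / 2 * Real.exp t) +
        (1 - q) * ((1 - (a - (q * b + (1 - q) * a))) / 2 * Real.exp (-t) +
          (1 + (a - (q * b + (1 - q) * a))) / 2 * Real.exp t) := by
        exact add_le_add (mul_le_mul_of_nonneg_left c1 hq0)
          (mul_le_mul_of_nonneg_left c2 (by linarith))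
    _ = (Real.exp t + Real.exp (-t)) / 2 := by ring
    _ ≤ Real.exp (t ^ 2 / 2) := hcosh

lemma snoc_update {n : ℕ} (y : Fin n → Bool) (b : Bool) (i : Fin n) (c : Bool) :
    (Fin.snoc (Function.update y i c) b : Fin (n + 1) → Bool) =
      Function.update (Fin.snoc y b) i.castSucc c := by
  funext j
  refine Fin.lastCases ?_ (fun j => ?_) j
  · rw [Function.update_of_ne (Fin.castSucc_lt_last i).ne', Fin.snoc_last, Fin.snoc_last]
  · rw [Fin.snoc_castSucc, Function.update_apply, Function.update_apply, Fin.snoc_castSucc]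
    simp [Fin.castSucc_inj]

lemma snoc_true_update {n : ℕ} (y : Fin n → Bool) :
    (Fin.snoc y true : Fin (n + 1) → Bool) =
      Function.update (Fin.snoc y false) (Fin.last n) true := by
  funext j
  refine Fin.lastCases ?_ (fun j => ?_) j
  · simp
  · rw [Fin.snoc_castSucc, Function.update_of_ne (Fin.castSucc_lt_last j).ne, Fin.snoc_castSucc]

/-- reindexing the cube sum along `Fin.snoc`. -/
lemma sum_snoc {n : ℕ} (g : (Fin (n + 1) → Bool) → ℝ) :
    ∑ x : Fin (n + 1) → Bool, g x = ∑ y : Fin n → Bool, ∑ b : Bool, g (Fin.snoc y b) := by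
  calc ∑ x : Fin (n + 1) → Bool, g x
      = ∑ yb : (Fin n → Bool) × Bool, g (Fin.snoc yb.1 yb.2) :=
        (Fintype.sum_equiv
    { toFun := fun yb : (Fin n → Bool) × Bool => (Fin.snoc yb.1 yb.2 : Fin (n + 1) → Bool)
      invFun := fun x => (Fin.init x, x (Fin.last n))
      left_inv := fun yb => by simp [Fin.init_snoc]
      right_inv := fun x => Fin.snoc_init_self x }
    (fun yb => g (Fin.snoc yb.1 yb.2)) g (fun yb => rfl)).symm
    _ = ∑ y : Fin n → Bool, ∑ b : Bool, g (Fin.snoc y b) := by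
        rw [Fintype.sum_prod_type]

lemma wt_snoc {n : ℕ} (p : Fin (n + 1) → ℝ) (y : Fin n → Bool) (b : Bool) :
    wt p (Fin.snoc y b) =
      wt (fun i => p i.castSucc) y * (if b then p (Fin.last n) else 1 - p (Fin.last n)) := by
  unfold wt
  rw [Fin.prod_univ_castSucc]
  simp

/-- McDiarmid-type mgf bound on the cube, by induction on the dimension. -/
theorem mgf_bound : ∀ (n : ℕ) (p : Fin n → ℝ), (∀ i, 0 ≤ p i) → (∀ i, p i ≤ 1) →
    ∀ f : (Fin n → Bool) → ℝ,
    (∀ x i (c : Bool), |f (Function.update x i c) - f x| ≤ 1) →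
    ∀ t : ℝ,
    ∑ x, wt p x * Real.exp (t * (f x - ∑ z, wt p z * f z)) ≤ Real.exp (t ^ 2 * n / 2) := by
  intro n
  induction n with
  | zero =>
      intro p _ _ f _ t
      simp [wt]
  | succ n ih =>
      intro p hp0 hp1 f hf t
      set q : ℝ := p (Fin.last n) with hq
      set p' : Fin n → ℝ := fun i => p i.castSucc with hp'
      have hq0 : 0 ≤ q := hp0 _
      have hq1 : q ≤ 1 := hp1 _
      set g : Bool → (Fin n → Bool) → ℝ := fun b y => f (Fin.snoc y b) with hg
      set h : (Fin n → Bool) → ℝ := fun y => q * g true y + (1 - q) * g false y with hh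
      set M : ℝ := ∑ z, wt p z * f z with hMdef
      have hp'0 : ∀ i, 0 ≤ p' i := fun i => hp0 _
      have hp'1 : ∀ i, p' i ≤ 1 := fun i => hp1 _
      have hM : M = ∑ y, wt p' y * h y := by
        rw [hMdef, sum_snoc (fun x => wt p x * f x)]
        refine Finset.sum_congr rfl fun y _ => ?_
        rw [Fintype.sum_bool, wt_snoc, wt_snoc]
        simp only [hh, hg, if_true, Bool.false_eq_true, if_false]
        ring
      have hgap : ∀ y, |g true y - g false y| ≤ 1 := by
        intro y
        have := hf (Fin.snoc y false) (Fin.last n) true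
        rwa [← snoc_true_update] at this
      have hhLip : ∀ y i (c : Bool), |h (Function.update y i c) - h y| ≤ 1 := by
        intro y i c
        have h1 := hf (Fin.snoc y true) i.castSucc c
        have h2 := hf (Fin.snoc y false) i.castSucc c
        rw [← snoc_update] at h1 h2
        have e : h (Function.update y i c) - h y =
            q * (g true (Function.update y i c) - g true y) +
            (1 - q) * (g false (Function.update y i c) - g false y) := by
          simp only [hh]; ring
        rw [e]
        calc |q * (g true (Function.update y i c) - g true y) +
              (1 - q) * (g false (Function.update y i c) - g false y)|
            ≤ |q * (g true (Function.update y i c) - g true y)| +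
              |(1 - q) * (g false (Function.update y i c) - g false y)| := abs_add_le _ _
          _ = q * |g true (Function.update y i c) - g true y| +
              (1 - q) * |g false (Function.update y i c) - g false y| := by
              rw [abs_mul, abs_mul, abs_of_nonneg hq0, abs_of_nonneg (show (0:ℝ) ≤ 1 - q by linarith)]
          _ ≤ q * 1 + (1 - q) * 1 :=
              add_le_add (mul_le_mul_of_nonneg_left h1 hq0)
                (mul_le_mul_of_nonneg_left h2 (by linarith))
          _ = 1 := by ring
      calc ∑ x, wt p x * Real.exp (t * (f x - M))
          = ∑ y : Fin n → Bool,
              (wt p' y * (q * Real.exp (t * (g true y - M)) +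
                (1 - q) * Real.exp (t * (g false y - M)))) := by
            rw [sum_snoc (fun x => wt p x * Real.exp (t * (f x - M)))]
            refine Finset.sum_congr rfl fun y _ => ?_
            rw [Fintype.sum_bool, wt_snoc, wt_snoc]
            simp only [hg, if_true, Bool.false_eq_true, if_false]
            ring
        _ ≤ ∑ y : Fin n → Bool,
              (wt p' y * (Real.exp (t * (h y - M)) * Real.exp (t ^ 2 / 2))) := by
            refine Finset.sum_le_sum fun y _ => ?_
            refine mul_le_mul_of_nonneg_left ?_ (wt_nonneg hp'0 hp'1 y)
            have e1 : t * (g true y - M) = t * (h y - M) + t * (g true y - h y) := by ring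
            have e2 : t * (g false y - M) = t * (h y - M) + t * (g false y - h y) := by ring
            rw [e1, e2, Real.exp_add, Real.exp_add, ← mul_assoc, ← mul_assoc,
              mul_comm q (Real.exp (t * (h y - M))), mul_comm (1 - q) (Real.exp (t * (h y - M))),
              mul_assoc, mul_assoc, ← mul_add]
            refine mul_le_mul_of_nonneg_left ?_ (Real.exp_pos _).le
            have := two_point t q (g false y) (g true y) hq0 hq1 (hgap y)
            simpa only [hh] using this
        _ = Real.exp (t ^ 2 / 2) * ∑ y, wt p' y * Real.exp (t * (h y - M)) := by
            rw [Finset.mul_sum]; refine Finset.sum_congr rfl fun y _ => ?_; ring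
        _ ≤ Real.exp (t ^ 2 / 2) * Real.exp (t ^ 2 * n / 2) := by
            refine mul_le_mul_of_nonneg_left ?_ (Real.exp_pos _).le
            have := ih p' hp'0 hp'1 h hhLip t
            rwa [← hM] at this
        _ = Real.exp (t ^ 2 * (n + 1 : ℕ) / 2) := by
            rw [← Real.exp_add]; congr 1; push_cast; ring

lemma hamm_update_le {n : ℕ} (x y : Fin n → Bool) (i : Fin n) (c : Bool) :
    (univ.filter fun j => Function.update x i c j ≠ y j).card ≤
      (univ.filter fun j => x j ≠ y j).card + 1 := by
  have hsub : (univ.filter fun j => Function.update x i c j ≠ y j) ⊆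
      insert i (univ.filter fun j => x j ≠ y j) := by
    intro j hj
    rcases eq_or_ne j i with rfl | hne
    · exact mem_insert_self _ _
    · refine mem_insert_of_mem ?_
      simp only [mem_filter, mem_univ, true_and] at hj ⊢
      rwa [Function.update_of_ne hne] at hj
  exact (card_le_card hsub).trans (card_insert_le _ _)

end BlowUpAux

/-- Asymmetric blowing-up lemma: there is a constant `C` such that for every
product probability measure on `{0,1}^n` (n ≥ 2) and every `B` with
`μ B ≥ 1/n`, the Hamming `d`-neighborhood of `B` with `d = C·√(n·log n)` has
measure at least `1 - 1/n`. -/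
theorem blowing_up_asymmetric :
    ∃ C : ℝ, 0 < C ∧ ∀ (n : ℕ), 2 ≤ n →
      ∀ p : Fin n → ℝ, (∀ i, 0 ≤ p i) → (∀ i, p i ≤ 1) →
      ∀ B : Finset (Fin n → Bool),
      (1 / n : ℝ) ≤ ∑ x ∈ B, ∏ i, (if x i then p i else 1 - p i) →
      ∀ d : ℕ, d = ⌈C * Real.sqrt (n * Real.log n)⌉₊ →
      (1 - 1 / n : ℝ) ≤
        ∑ x ∈ univ.filter (fun x : Fin n → Bool =>
            ∃ y ∈ B, (univ.filter (fun i => x i ≠ y i)).card ≤ d),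
          ∏ i, (if x i then p i else 1 - p i) := by
  classical
  refine ⟨3, by norm_num, ?_⟩
  intro n hn p hp0 hp1 B hB1 d hd
  have hn2 : (2:ℝ) ≤ n := by exact_mod_cast hn
  have hN1 : (1:ℝ) < n := by linarith
  have hN0 : (0:ℝ) < n := by linarith
  have hlog : 0 < Real.log n := Real.log_pos hN1
  have hB1' : (1/n : ℝ) ≤ ∑ x ∈ B, BlowUpAux.wt p x := hB1
  have hBne : B.Nonempty := by
    rcases B.eq_empty_or_nonempty with rfl | h
    · simp only [Finset.sum_empty] at hB1'
      have : (0:ℝ) < 1/n := by positivity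
      linarith
    · exact h
  set Df : (Fin n → Bool) → ℕ :=
    fun x => B.inf' hBne (fun y => (univ.filter fun j => x j ≠ y j).card) with hDf
  set f : (Fin n → Bool) → ℝ := fun x => (Df x : ℝ) with hfdef
  have hDle : ∀ (x : Fin n → Bool) (i : Fin n) (c : Bool),
      Df (Function.update x i c) ≤ Df x + 1 := by
    intro x i c
    obtain ⟨y₀, hy₀B, hy₀⟩ := Finset.exists_mem_eq_inf' hBne
      (fun y => (univ.filter fun j => x j ≠ y j).card)
    calc Df (Function.update x i c)
        ≤ (univ.filter fun j => Function.update x i c j ≠ y₀ j).card :=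
          Finset.inf'_le _ hy₀B
      _ ≤ (univ.filter fun j => x j ≠ y₀ j).card + 1 := BlowUpAux.hamm_update_le x y₀ i c
      _ = Df x + 1 := by exact congrArg (· + 1) hy₀.symm
  have hfLip : ∀ x i (c : Bool), |f (Function.update x i c) - f x| ≤ 1 := by
    intro x i c
    have h1 := hDle x i c
    have h2 := hDle (Function.update x i c) i (x i)
    rw [Function.update_idem, Function.update_eq_self] at h2
    have h1' : (Df (Function.update x i c) : ℝ) ≤ Df x + 1 := by exact_mod_cast h1
    have h2' : (Df x : ℝ) ≤ Df (Function.update x i c) + 1 := by exact_mod_cast h2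
    rw [abs_le]
    constructor
    · simp only [hfdef]; linarith
    · simp only [hfdef]; linarith
  set M : ℝ := ∑ z, BlowUpAux.wt p z * f z with hM
  set t : ℝ := d / (2 * n) with ht
  have ht0 : 0 ≤ t := by positivity
  have hd_lb : 3 * Real.sqrt (n * Real.log n) ≤ d := by rw [hd]; exact Nat.le_ceil _
  have hd2 : 8 * ((n:ℝ) * Real.log n) ≤ (d:ℝ)^2 := by
    have h0 : 0 ≤ 3 * Real.sqrt ((n:ℝ) * Real.log n) := by positivity
    have hsq : (3 * Real.sqrt ((n:ℝ) * Real.log n))^2 ≤ (d:ℝ)^2 :=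
      pow_le_pow_left₀ h0 hd_lb 2
    rw [mul_pow, Real.sq_sqrt (by positivity)] at hsq
    nlinarith [mul_pos hN0 hlog]
  have hfB : ∀ x ∈ B, f x = 0 := by
    intro x hx
    have h0 : Df x ≤ 0 := by
      have he : (univ.filter fun j => x j ≠ x j).card = 0 := by simp
      calc Df x ≤ (univ.filter fun j => x j ≠ x j).card := Finset.inf'_le _ hx
        _ = 0 := he
    have : Df x = 0 := Nat.le_zero.mp h0
    simp [hfdef, this]
  have key1 := BlowUpAux.mgf_bound n p hp0 hp1 f hfLip (-t)
  have key2 := BlowUpAux.mgf_bound n p hp0 hp1 f hfLip t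
  rw [← hM, neg_sq] at key1
  rw [← hM] at key2
  -- Step (i): bound on exp (t*M)
  have hIB : (1:ℝ)/n * Real.exp (t * M) ≤ Real.exp (t^2 * n / 2) := by
    have hstep : ∑ x ∈ B, BlowUpAux.wt p x * Real.exp ((-t) * (f x - M)) ≤
        Real.exp (t^2 * n/2) := by
      refine le_trans (Finset.sum_le_sum_of_subset_of_nonneg (Finset.subset_univ B) ?_) key1
      intro x _ _
      exact mul_nonneg (BlowUpAux.wt_nonneg hp0 hp1 x) (Real.exp_pos _).le
    have heq : ∑ x ∈ B, BlowUpAux.wt p x * Real.exp ((-t) * (f x - M)) =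
        (∑ x ∈ B, BlowUpAux.wt p x) * Real.exp (t * M) := by
      rw [Finset.sum_mul]
      refine Finset.sum_congr rfl fun x hx => ?_
      rw [hfB x hx]
      congr 1
      ring
    calc (1:ℝ)/n * Real.exp (t*M)
        ≤ (∑ x ∈ B, BlowUpAux.wt p x) * Real.exp (t*M) :=
          mul_le_mul_of_nonneg_right hB1' (Real.exp_pos _).le
      _ = ∑ x ∈ B, BlowUpAux.wt p x * Real.exp ((-t)*(f x - M)) := heq.symm
      _ ≤ Real.exp (t^2*n/2) := hstep
  have hexpM : Real.exp (t * M) ≤ n * Real.exp (t^2 * n / 2) := by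
    have hm := mul_le_mul_of_nonneg_left hIB hN0.le
    rw [← mul_assoc, mul_one_div, div_self hN0.ne', one_mul] at hm
    exact hm
  -- Step (ii): bound the complement
  have hsplit := Finset.sum_filter_add_sum_filter_not univ
    (fun x : Fin n → Bool => ∃ y ∈ B, (univ.filter (fun i => x i ≠ y i)).card ≤ d)
    (BlowUpAux.wt p)
  rw [BlowUpAux.wt_sum_one p] at hsplit
  have hfd : ∀ x ∈ univ.filter (fun x : Fin n → Bool =>
      ¬ ∃ y ∈ B, (univ.filter (fun i => x i ≠ y i)).card ≤ d), (d:ℝ) ≤ f x := by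
    intro x hx
    rw [Finset.mem_filter] at hx
    have hx' := hx.2
    push_neg at hx'
    have hD : d + 1 ≤ Df x :=
      Finset.le_inf' hBne _ (fun y hy => by have := hx' y hy; omega)
    have : (d:ℝ) ≤ (Df x : ℝ) := by exact_mod_cast Nat.le_of_succ_le hD
    simpa [hfdef] using this
  have hSbound : (∑ x ∈ univ.filter (fun x : Fin n → Bool =>
      ¬ ∃ y ∈ B, (univ.filter (fun i => x i ≠ y i)).card ≤ d), BlowUpAux.wt p x) *
      Real.exp (t * ((d:ℝ) - M)) ≤ Real.exp (t^2*n/2) := by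
    rw [Finset.sum_mul]
    calc ∑ x ∈ univ.filter (fun x : Fin n → Bool =>
          ¬ ∃ y ∈ B, (univ.filter (fun i => x i ≠ y i)).card ≤ d),
          BlowUpAux.wt p x * Real.exp (t * ((d:ℝ) - M))
        ≤ ∑ x ∈ univ.filter (fun x : Fin n → Bool =>
          ¬ ∃ y ∈ B, (univ.filter (fun i => x i ≠ y i)).card ≤ d),
          BlowUpAux.wt p x * Real.exp (t * (f x - M)) := by
          refine Finset.sum_le_sum fun x hx => ?_
          refine mul_le_mul_of_nonneg_left ?_ (BlowUpAux.wt_nonneg hp0 hp1 x)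
          exact Real.exp_le_exp.mpr
            (mul_le_mul_of_nonneg_left (sub_le_sub_right (hfd x hx) M) ht0)
      _ ≤ ∑ x, BlowUpAux.wt p x * Real.exp (t * (f x - M)) := by
          refine Finset.sum_le_sum_of_subset_of_nonneg (Finset.filter_subset _ _) ?_
          intro x _ _
          exact mul_nonneg (BlowUpAux.wt_nonneg hp0 hp1 x) (Real.exp_pos _).le
      _ ≤ Real.exp (t^2*n/2) := key2
  have hS2 : (∑ x ∈ univ.filter (fun x : Fin n → Bool =>
      ¬ ∃ y ∈ B, (univ.filter (fun i => x i ≠ y i)).card ≤ d), BlowUpAux.wt p x) ≤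
      Real.exp (t^2*n/2 + (t*M - t*(d:ℝ))) := by
    have hm := mul_le_mul_of_nonneg_right hSbound (Real.exp_pos (-(t * ((d:ℝ) - M)))).le
    rw [mul_assoc, ← Real.exp_add, add_neg_cancel, Real.exp_zero, mul_one,
      ← Real.exp_add] at hm
    have he : t ^ 2 * ↑n / 2 + -(t * ((d:ℝ) - M)) = t^2*n/2 + (t*M - t*(d:ℝ)) := by ring
    rwa [he] at hm
  have hS3 : (∑ x ∈ univ.filter (fun x : Fin n → Bool =>
      ¬ ∃ y ∈ B, (univ.filter (fun i => x i ≠ y i)).card ≤ d), BlowUpAux.wt p x) ≤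
      ↑n * Real.exp (t^2*↑n - t*(d:ℝ)) := by
    have e1 : t^2*(n:ℝ)/2 + (t*M - t*(d:ℝ)) = t*M + (t^2*(n:ℝ)/2 - t*(d:ℝ)) := by ring
    have e2 : t^2*(n:ℝ)/2 + (t^2*(n:ℝ)/2 - t*(d:ℝ)) = t^2*(n:ℝ) - t*(d:ℝ) := by ring
    calc (∑ x ∈ univ.filter (fun x : Fin n → Bool =>
          ¬ ∃ y ∈ B, (univ.filter (fun i => x i ≠ y i)).card ≤ d), BlowUpAux.wt p x)
        ≤ Real.exp (t^2*n/2 + (t*M - t*(d:ℝ))) := hS2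
      _ = Real.exp (t*M) * Real.exp (t^2*(n:ℝ)/2 - t*(d:ℝ)) := by
          rw [← Real.exp_add, e1]
      _ ≤ (↑n * Real.exp (t^2*(n:ℝ)/2)) * Real.exp (t^2*(n:ℝ)/2 - t*(d:ℝ)) :=
          mul_le_mul_of_nonneg_right hexpM (Real.exp_pos _).le
      _ = ↑n * Real.exp (t^2*(n:ℝ) - t*(d:ℝ)) := by
          rw [mul_assoc, ← Real.exp_add, e2]
  have hexp_eq : t^2*(n:ℝ) - t*(d:ℝ) = -((d:ℝ)^2/(4*n)) := by
    rw [ht]; field_simp; ring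
  have h2logn : 2 * Real.log n ≤ (d:ℝ)^2 / (4*n) := by
    rw [le_div_iff₀ (by positivity)]
    nlinarith [hd2]
  have hfin : (n:ℝ) * Real.exp (-((d:ℝ)^2/(4*n))) ≤ 1/n := by
    rw [le_div_iff₀ hN0]
    have hA : Real.exp (2*Real.log n) = (n:ℝ) * n := by
      rw [two_mul, Real.exp_add, Real.exp_log hN0]
    have hB2 : Real.exp (-((d:ℝ)^2/(4*n))) * Real.exp (2*Real.log n) ≤ 1 := by
      rw [← Real.exp_add]
      exact Real.exp_le_one_iff.mpr (by linarith)
    calc (n:ℝ) * Real.exp (-((d:ℝ)^2/(4*n))) * n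
        = Real.exp (-((d:ℝ)^2/(4*n))) * Real.exp (2*Real.log n) := by rw [hA]; ring
      _ ≤ 1 := hB2
  have hcomp : (∑ x ∈ univ.filter (fun x : Fin n → Bool =>
      ¬ ∃ y ∈ B, (univ.filter (fun i => x i ≠ y i)).card ≤ d), BlowUpAux.wt p x) ≤ 1/n := by
    rw [hexp_eq] at hS3
    exact hS3.trans hfin
  show (1 - 1/n : ℝ) ≤ ∑ x ∈ univ.filter (fun x : Fin n → Bool =>
      ∃ y ∈ B, (univ.filter (fun i => x i ≠ y i)).card ≤ d), BlowUpAux.wt p x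
  linarith
end

section
/- For fixed τ ∈ (0, 1/2), define N(p,τ) = p + τ - 2pτ. The function p ↦ H(N(p,τ)) ∘ (H restricted to [0,1/2])⁻¹, i.e., the curve {(H(p), H(N(p,τ))) : p ∈ [0,1/2]}, is convex: the map g : [0,1] → [0,1] with g(H(p)) = H(N(p,τ)) is a convex function of its argument. -/
/-- Binary entropy function (base 2). -/
noncomputable def binEnt (p : ℝ) : ℝ :=
  -(p * Real.logb 2 p) - (1 - p) * Real.logb 2 (1 - p)

/-- The parameter of a Bernoulli bit after passing through a binary symmetric
channel with crossover probability `τ`. -/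
def noiseParam (p τ : ℝ) : ℝ := p + τ - 2 * p * τ

open Real Set

namespace MGLaux

lemma binEnt_eq (x : ℝ) : binEnt x = Real.binEntropy x / Real.log 2 := by
  unfold binEnt Real.binEntropy Real.logb
  rw [Real.log_inv, Real.log_inv]
  ring

lemma L_pos {x : ℝ} (h0 : 0 < x) (h1 : x < 1/2) :
    0 < Real.log (1 - x) - Real.log x :=
  sub_pos.2 (Real.log_lt_log h0 (by linarith))

lemma L_nonneg {x : ℝ} (h0 : 0 < x) (h1 : x ≤ 1/2) :
    0 ≤ Real.log (1 - x) - Real.log x :=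
  sub_nonneg.2 (Real.log_le_log h0 (by linarith))

lemma hasDerivAt_N (τ x : ℝ) : HasDerivAt (fun y => noiseParam y τ) (1 - 2*τ) x := by
  have h : (fun y => noiseParam y τ) = fun y => (1 - 2*τ) * y + τ := by
    funext y; unfold noiseParam; ring
  rw [h]
  simpa using (HasDerivAt.const_mul (1 - 2*τ) (hasDerivAt_id x)).add_const τ

lemma N_pos {τ x : ℝ} (hτ : τ ∈ Ioo (0:ℝ) (1/2)) (hx0 : 0 ≤ x) (hx2 : x ≤ 1/2) :
    0 < noiseParam x τ := by
  obtain ⟨h1, h2⟩ := hτ; unfold noiseParam; nlinarith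

lemma N_lt_half {τ x : ℝ} (hτ : τ ∈ Ioo (0:ℝ) (1/2)) (hx2 : x < 1/2) :
    noiseParam x τ < 1/2 := by
  obtain ⟨h1, h2⟩ := hτ; unfold noiseParam; nlinarith

lemma N_le_half {τ x : ℝ} (hτ : τ ∈ Ioo (0:ℝ) (1/2)) (hx2 : x ≤ 1/2) :
    noiseParam x τ ≤ 1/2 := by
  obtain ⟨h1, h2⟩ := hτ; unfold noiseParam; nlinarith

lemma hasDerivAt_L {x : ℝ} (hx0 : 0 < x) (hx1 : x < 1) :
    HasDerivAt (fun y : ℝ => Real.log (1-y) - Real.log y) (-(1/(1-x)) - 1/x) x := by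
  have h1x : (0:ℝ) < 1 - x := by linarith
  have h1 : HasDerivAt (fun y : ℝ => Real.log (1-y)) (-(1/(1-x))) x := by
    have := (((hasDerivAt_const x (1:ℝ)).sub (hasDerivAt_id x))).log h1x.ne'
    convert this using 1
    · rfl
    simp only [Pi.sub_apply, id_eq]
    ring
  have h2 : HasDerivAt Real.log (1/x) x := by
    simpa [one_div] using Real.hasDerivAt_log hx0.ne'
  exact h1.sub h2

/-- Concavity of `x ↦ x(1-x)(log(1-x) - log x)` on `[0,1/2]`. -/
lemma concave_f : ConcaveOn ℝ (Icc (0:ℝ) (1/2))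
    (fun x => x * (1 - x) * (Real.log (1 - x) - Real.log x)) := by
  apply concaveOn_of_hasDerivWithinAt2_nonpos (convex_Icc _ _)
    (f' := fun x => (1 - 2*x) * (Real.log (1-x) - Real.log x) - 1)
    (f'' := fun x => -2 * (Real.log (1-x) - Real.log x) + (1 - 2*x) * (-(1/(1-x)) - 1/x))
  · -- continuity
    have hc : Continuous (fun x : ℝ => x * ((1-x) * Real.log (1-x)) - (1-x) * (x * Real.log x)) := by
      have h1 : Continuous (fun x : ℝ => (1-x) * Real.log (1-x)) :=
        Real.continuous_mul_log.comp (continuous_const.sub continuous_id)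
      exact (continuous_id.mul h1).sub
        ((continuous_const.sub continuous_id).mul Real.continuous_mul_log)
    have he : (fun x : ℝ => x * (1 - x) * (Real.log (1 - x) - Real.log x)) =
        fun x : ℝ => x * ((1-x) * Real.log (1-x)) - (1-x) * (x * Real.log x) := by
      funext x; ring
    rw [he]; exact hc.continuousOn
  · -- first derivative
    rw [interior_Icc]
    rintro x ⟨hx0, hx2⟩
    have hx1 : x < 1 := by linarith
    have h1x : (0:ℝ) < 1 - x := by linarith
    have hA : HasDerivAt (fun y : ℝ => y * (1-y)) (1 - 2*x) x := by
      have := (hasDerivAt_id x).mul ((hasDerivAt_const x (1:ℝ)).sub (hasDerivAt_id x))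
      convert this using 1
      · rfl
      · rfl
      · rfl
      simp [id]
      ring
    have hprod := hA.mul (hasDerivAt_L hx0 hx1)
    have heq : (1 - 2*x) * (Real.log (1-x) - Real.log x) - 1 =
        (1 - 2*x) * (Real.log (1 - x) - Real.log x) +
          x * (1-x) * (-(1/(1-x)) - 1/x) := by
      field_simp
      ring
    rw [heq]
    exact hprod.hasDerivWithinAt
  · -- second derivative
    rw [interior_Icc]
    rintro x ⟨hx0, hx2⟩
    have hx1 : x < 1 := by linarith
    have hB : HasDerivAt (fun y : ℝ => 1 - 2*y) (-2 : ℝ) x := by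
      exact ((hasDerivAt_const x (1:ℝ)).sub (HasDerivAt.const_mul (2:ℝ) (hasDerivAt_id x))).congr_deriv (by ring)
    exact ((hB.mul (hasDerivAt_L hx0 hx1)).sub_const 1).hasDerivWithinAt
  · -- nonpositivity
    rw [interior_Icc]
    rintro x ⟨hx0, hx2⟩
    have h1x : (0:ℝ) < 1 - x := by linarith
    have hL := L_nonneg hx0 hx2.le
    have h1 : 0 < 1/(1-x) := by positivity
    have h2 : 0 < 1/x := by positivity
    nlinarith

/-- Key inequality: `(1-2τ)·f(p) ≤ f(N(p,τ))` where `f(x) = x(1-x)(log(1-x)-log x)`. -/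
lemma key_ineq {τ x : ℝ} (hτ : τ ∈ Ioo (0:ℝ) (1/2)) (hx : x ∈ Ioo (0:ℝ) (1/2)) :
    (1 - 2*τ) * (x * (1-x) * (Real.log (1-x) - Real.log x)) ≤
      noiseParam x τ * (1 - noiseParam x τ) *
        (Real.log (1 - noiseParam x τ) - Real.log (noiseParam x τ)) := by
  have h := concave_f.2 ⟨hx.1.le, hx.2.le⟩
      (⟨by norm_num, by norm_num⟩ : (1/2:ℝ) ∈ Icc (0:ℝ) (1/2))
      (show (0:ℝ) ≤ 1 - 2*τ by linarith [hτ.2]) (show (0:ℝ) ≤ 2*τ by linarith [hτ.1])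
      (show (1 - 2*τ) + 2*τ = 1 by ring)
  simp only [smul_eq_mul] at h
  have e1 : (1 - 2*τ) * x + 2*τ * (1/2) = noiseParam x τ := by unfold noiseParam; ring
  rw [e1] at h
  have e2 : (1/2 : ℝ) * (1 - 1/2) * (Real.log (1 - 1/2) - Real.log (1/2)) = 0 := by
    norm_num
  rw [e2] at h
  linarith

/-- Monotonicity of `x ↦ (1-2τ)·L(N(x,τ))/L(x)` on `(0,1/2)`. -/
lemma r_mono {τ : ℝ} (hτ : τ ∈ Ioo (0:ℝ) (1/2)) :
    MonotoneOn (fun x => (1 - 2*τ) *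
        (Real.log (1 - noiseParam x τ) - Real.log (noiseParam x τ)) /
        (Real.log (1 - x) - Real.log x)) (Ioo (0:ℝ) (1/2)) := by
  have hc : (0:ℝ) < 1 - 2*τ := by linarith [hτ.2]
  have hderiv : ∀ x ∈ Ioo (0:ℝ) (1/2), HasDerivAt
      (fun x => (1 - 2*τ) *
        (Real.log (1 - noiseParam x τ) - Real.log (noiseParam x τ)) /
        (Real.log (1 - x) - Real.log x))
      ((((1 - 2*τ) * (-(1 - 2*τ)/(1 - noiseParam x τ) - (1 - 2*τ)/(noiseParam x τ))) *
          (Real.log (1 - x) - Real.log x) -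
        (1 - 2*τ) * (Real.log (1 - noiseParam x τ) - Real.log (noiseParam x τ)) *
          (-(1/(1-x)) - 1/x)) / (Real.log (1 - x) - Real.log x)^2) x := by
    rintro x ⟨hx0, hx2⟩
    have hx1 : x < 1 := by linarith
    have h1x : (0:ℝ) < 1 - x := by linarith
    have hq0 : 0 < noiseParam x τ := N_pos hτ hx0.le hx2.le
    have hq2 : noiseParam x τ < 1/2 := N_lt_half hτ hx2
    have h1q : (0:ℝ) < 1 - noiseParam x τ := by linarith
    have hLx := L_pos hx0 hx2
    have hN := hasDerivAt_N τ x
    have hnum : HasDerivAt (fun y => (1 - 2*τ) *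
        (Real.log (1 - noiseParam y τ) - Real.log (noiseParam y τ)))
        ((1 - 2*τ) * (-(1 - 2*τ)/(1 - noiseParam x τ) - (1 - 2*τ)/(noiseParam x τ))) x := by
      have h1 : HasDerivAt (fun y => Real.log (1 - noiseParam y τ))
          (-(1 - 2*τ)/(1 - noiseParam x τ)) x := by
        have := ((hasDerivAt_const x (1:ℝ)).sub hN).log h1q.ne'
        convert this using 1
        · rfl
        simp only [Pi.sub_apply]
        ring
      have h2 : HasDerivAt (fun y => Real.log (noiseParam y τ))
          ((1 - 2*τ)/(noiseParam x τ)) x := hN.log hq0.ne'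
      exact HasDerivAt.const_mul _ (h1.sub h2)
    exact hnum.div (hasDerivAt_L hx0 hx1) hLx.ne'
  have hint : interior (Ioo (0:ℝ) (1/2)) = Ioo (0:ℝ) (1/2) := isOpen_Ioo.interior_eq
  apply monotoneOn_of_hasDerivWithinAt_nonneg (convex_Ioo _ _)
    (f' := fun x => (((1 - 2*τ) * (-(1 - 2*τ)/(1 - noiseParam x τ) - (1 - 2*τ)/(noiseParam x τ))) *
          (Real.log (1 - x) - Real.log x) -
        (1 - 2*τ) * (Real.log (1 - noiseParam x τ) - Real.log (noiseParam x τ)) *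
          (-(1/(1-x)) - 1/x)) / (Real.log (1 - x) - Real.log x)^2)
  · exact fun x hx => (hderiv x hx).continuousAt.continuousWithinAt
  · rw [hint]; exact fun x hx => (hderiv x hx).hasDerivWithinAt
  · rw [hint]
    rintro x ⟨hx0, hx2⟩
    have hx1 : x < 1 := by linarith
    have h1x : (0:ℝ) < 1 - x := by linarith
    have hq0 : 0 < noiseParam x τ := N_pos hτ hx0.le hx2.le
    have hq2 : noiseParam x τ < 1/2 := N_lt_half hτ hx2
    have h1q : (0:ℝ) < 1 - noiseParam x τ := by linarith
    have hLx := L_pos hx0 hx2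
    have hLq := L_pos hq0 hq2
    apply div_nonneg _ (sq_nonneg _)
    have key := key_ineq hτ ⟨hx0, hx2⟩
    have e : ((1 - 2*τ) * (-(1 - 2*τ)/(1 - noiseParam x τ) - (1 - 2*τ)/(noiseParam x τ))) *
          (Real.log (1 - x) - Real.log x) -
        (1 - 2*τ) * (Real.log (1 - noiseParam x τ) - Real.log (noiseParam x τ)) *
          (-(1/(1-x)) - 1/x) =
        (1 - 2*τ) * (Real.log (1 - noiseParam x τ) - Real.log (noiseParam x τ)) / (x*(1-x)) -
        (1 - 2*τ)^2 * (Real.log (1 - x) - Real.log x) /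
          (noiseParam x τ * (1 - noiseParam x τ)) := by
      field_simp
      ring
    rw [e, sub_nonneg, div_le_div_iff₀ (by positivity) (by positivity)]
    nlinarith [mul_le_mul_of_nonneg_left key hc.le]

lemma hasDerivAt_F {τ x : ℝ} (hτ : τ ∈ Ioo (0:ℝ) (1/2)) (hx0 : 0 < x) (hx2 : x < 1/2) :
    HasDerivAt (fun y => Real.binEntropy (noiseParam y τ))
      ((1 - 2*τ) * (Real.log (1 - noiseParam x τ) - Real.log (noiseParam x τ))) x := by
  have hq0 : 0 < noiseParam x τ := N_pos hτ hx0.le hx2.le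
  have hq2 : noiseParam x τ < 1/2 := N_lt_half hτ hx2
  have h := (Real.hasDerivAt_binEntropy hq0.ne' (by linarith : noiseParam x τ ≠ 1)).comp x
    (hasDerivAt_N τ x)
  exact h.congr_deriv (by ring)

lemma F_cont (τ : ℝ) : Continuous (fun y => Real.binEntropy (noiseParam y τ)) := by
  apply Real.binEntropy_continuous.comp
  unfold noiseParam
  fun_prop

/-- Natural-log version of the convexity statement, assuming `p₁ ≤ p₂`. -/
lemma master {τ : ℝ} (hτ : τ ∈ Ioo (0:ℝ) (1/2))
    {p p₁ p₂ : ℝ} (hp : p ∈ Icc (0:ℝ) (1/2)) (hp₁ : p₁ ∈ Icc (0:ℝ) (1/2))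
    (hp₂ : p₂ ∈ Icc (0:ℝ) (1/2)) (h12 : p₁ ≤ p₂)
    {t : ℝ} (ht : t ∈ Icc (0:ℝ) 1)
    (hcomb : Real.binEntropy p = (1-t) * Real.binEntropy p₁ + t * Real.binEntropy p₂) :
    Real.binEntropy (noiseParam p τ) ≤
      (1-t) * Real.binEntropy (noiseParam p₁ τ) + t * Real.binEntropy (noiseParam p₂ τ) := by
  have h2i : (2⁻¹ : ℝ) = 1/2 := by norm_num
  have Emono : StrictMonoOn Real.binEntropy (Icc (0:ℝ) (1/2)) := by
    rw [← h2i]; exact Real.binEntropy_strictMonoOn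
  have hE12 : Real.binEntropy p₁ ≤ Real.binEntropy p₂ := by
    rcases eq_or_lt_of_le h12 with h | h
    · rw [h]
    · exact (Emono hp₁ hp₂ h).le
  have hEp1 : Real.binEntropy p₁ ≤ Real.binEntropy p := by
    linarith [mul_nonneg ht.1 (sub_nonneg.2 hE12)]
  have hEp2 : Real.binEntropy p ≤ Real.binEntropy p₂ := by
    linarith [mul_nonneg (sub_nonneg.2 ht.2) (sub_nonneg.2 hE12)]
  have hp₁p : p₁ ≤ p := by
    by_contra h
    push_neg at h
    exact absurd hEp1 (not_le.2 (Emono hp hp₁ h))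
  have hpp₂ : p ≤ p₂ := by
    by_contra h
    push_neg at h
    exact absurd hEp2 (not_le.2 (Emono hp₂ hp h))
  have FmonoN : ∀ a b, a ∈ Icc (0:ℝ) (1/2) → b ∈ Icc (0:ℝ) (1/2) → a ≤ b →
      Real.binEntropy (noiseParam a τ) ≤ Real.binEntropy (noiseParam b τ) := by
    intro a b ha hb hab
    rcases eq_or_lt_of_le hab with h | h
    · rw [h]
    · have hNa : noiseParam a τ ∈ Icc (0:ℝ) (1/2) :=
        ⟨(N_pos hτ ha.1 ha.2).le, N_le_half hτ ha.2⟩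
      have hNb : noiseParam b τ ∈ Icc (0:ℝ) (1/2) :=
        ⟨(N_pos hτ hb.1 hb.2).le, N_le_half hτ hb.2⟩
      have hlt : noiseParam a τ < noiseParam b τ := by
        unfold noiseParam; nlinarith [hτ.2]
      exact (Emono hNa hNb hlt).le
  rcases eq_or_lt_of_le hp₁p with hep | hlt₁
  · -- p₁ = p
    rw [← hep]
    linarith [mul_nonneg ht.1 (sub_nonneg.2 (FmonoN p₁ p₂ hp₁ hp₂ h12))]
  rcases eq_or_lt_of_le hpp₂ with hep | hlt₂
  · -- p = p₂
    subst hep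
    have h0 : (1-t) * (Real.binEntropy p - Real.binEntropy p₁) = 0 := by linarith
    rcases mul_eq_zero.1 h0 with h | h
    · have h1 : t = 1 := by linarith
      rw [h1]
      norm_num
    · have hEe : Real.binEntropy p₁ = Real.binEntropy p := by linarith
      have hpe : p₁ = p := Emono.injOn hp₁ hp hEe
      rw [← hpe]
      linarith [mul_nonneg ht.1 (le_refl (0:ℝ))]
  -- main case : p₁ < p < p₂
  set E := Real.binEntropy with hE
  set F := fun y => Real.binEntropy (noiseParam y τ) with hF
  have hEcont : ContinuousOn E (Icc p₁ p) := Real.binEntropy_continuous.continuousOn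
  have hEcont2 : ContinuousOn E (Icc p p₂) := Real.binEntropy_continuous.continuousOn
  have hFcont : ContinuousOn F (Icc p₁ p) := (F_cont τ).continuousOn
  have hFcont2 : ContinuousOn F (Icc p p₂) := (F_cont τ).continuousOn
  have hE' : ∀ x ∈ Ioo p₁ p, HasDerivAt E (Real.log (1-x) - Real.log x) x := by
    rintro x ⟨ha, hb⟩
    have hx0 : 0 < x := lt_of_le_of_lt hp₁.1 ha
    have hx2 : x < 1/2 := lt_of_lt_of_le hb hp.2
    exact Real.hasDerivAt_binEntropy hx0.ne' (by linarith)
  have hE'2 : ∀ x ∈ Ioo p p₂, HasDerivAt E (Real.log (1-x) - Real.log x) x := by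
    rintro x ⟨ha, hb⟩
    have hx0 : 0 < x := lt_of_le_of_lt hp.1 ha
    have hx2 : x < 1/2 := lt_of_lt_of_le hb hp₂.2
    exact Real.hasDerivAt_binEntropy hx0.ne' (by linarith)
  have hF' : ∀ x ∈ Ioo p₁ p, HasDerivAt F
      ((1 - 2*τ) * (Real.log (1 - noiseParam x τ) - Real.log (noiseParam x τ))) x := by
    rintro x ⟨ha, hb⟩
    exact hasDerivAt_F hτ (lt_of_le_of_lt hp₁.1 ha) (lt_of_lt_of_le hb hp.2)
  have hF'2 : ∀ x ∈ Ioo p p₂, HasDerivAt F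
      ((1 - 2*τ) * (Real.log (1 - noiseParam x τ) - Real.log (noiseParam x τ))) x := by
    rintro x ⟨ha, hb⟩
    exact hasDerivAt_F hτ (lt_of_le_of_lt hp.1 ha) (lt_of_lt_of_le hb hp₂.2)
  obtain ⟨ξ₁, hξ₁, heq₁⟩ := exists_ratio_hasDerivAt_eq_ratio_slope E
    (fun x => Real.log (1-x) - Real.log x) hlt₁ hEcont hE' F
    (fun x => (1 - 2*τ) * (Real.log (1 - noiseParam x τ) - Real.log (noiseParam x τ)))
    hFcont hF'
  obtain ⟨ξ₂, hξ₂, heq₂⟩ := exists_ratio_hasDerivAt_eq_ratio_slope E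
    (fun x => Real.log (1-x) - Real.log x) hlt₂ hEcont2 hE'2 F
    (fun x => (1 - 2*τ) * (Real.log (1 - noiseParam x τ) - Real.log (noiseParam x τ)))
    hFcont2 hF'2
  have hξ₁m : ξ₁ ∈ Ioo (0:ℝ) (1/2) :=
    ⟨lt_of_le_of_lt hp₁.1 hξ₁.1, lt_of_lt_of_le hξ₁.2 hp.2⟩
  have hξ₂m : ξ₂ ∈ Ioo (0:ℝ) (1/2) :=
    ⟨lt_of_le_of_lt hp.1 hξ₂.1, lt_of_lt_of_le hξ₂.2 hp₂.2⟩
  have hr : (1 - 2*τ) * (Real.log (1 - noiseParam ξ₁ τ) - Real.log (noiseParam ξ₁ τ)) /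
        (Real.log (1 - ξ₁) - Real.log ξ₁) ≤
      (1 - 2*τ) * (Real.log (1 - noiseParam ξ₂ τ) - Real.log (noiseParam ξ₂ τ)) /
        (Real.log (1 - ξ₂) - Real.log ξ₂) :=
    r_mono hτ hξ₁m hξ₂m (le_of_lt (lt_trans hξ₁.2 hξ₂.1))
  set r₁ := (1 - 2*τ) * (Real.log (1 - noiseParam ξ₁ τ) - Real.log (noiseParam ξ₁ τ)) /
      (Real.log (1 - ξ₁) - Real.log ξ₁) with hr₁
  set r₂ := (1 - 2*τ) * (Real.log (1 - noiseParam ξ₂ τ) - Real.log (noiseParam ξ₂ τ)) /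
      (Real.log (1 - ξ₂) - Real.log ξ₂) with hr₂
  have hL₁ := L_pos hξ₁m.1 hξ₁m.2
  have hL₂ := L_pos hξ₂m.1 hξ₂m.2
  have h1 : F p - F p₁ = (E p - E p₁) * r₁ := by
    rw [hr₁]
    field_simp
    linear_combination heq₁
  have h2 : F p₂ - F p = (E p₂ - E p) * r₂ := by
    rw [hr₂]
    field_simp
    linear_combination heq₂
  have hA : 0 < E p - E p₁ := sub_pos.2 (Emono hp₁ hp hlt₁)
  have hB : 0 < E p₂ - E p := sub_pos.2 (Emono hp hp₂ hlt₂)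
  have htB : t * (E p₂ - E p) = (1-t) * (E p - E p₁) := by linarith
  have e1 : t * ((E p₂ - E p) * r₂) = (1-t) * ((E p - E p₁) * r₂) := by
    linear_combination r₂ * htB
  have e2 : 0 ≤ (1-t) * ((E p - E p₁) * (r₂ - r₁)) :=
    mul_nonneg (by linarith [ht.2]) (mul_nonneg hA.le (by linarith))
  have hgoal : (1-t) * F p₁ + t * F p₂ - F p =
      (1-t) * ((E p - E p₁) * (r₂ - r₁)) +
        (t * ((E p₂ - E p) * r₂) - (1-t) * ((E p - E p₁) * r₂)) := by
    linear_combination (-(1-t)) * h1 + t * h2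
  linarith [hgoal, e1, e2]

end MGLaux

/-- Convexity of the noise curve `{(H(p), H(N(p,τ))) : p ∈ [0,1/2]}`: whenever
`H(p)` is a convex combination of `H(p₁)` and `H(p₂)`, the value `H(N(p,τ))`
is at most the corresponding convex combination of `H(N(p₁,τ))` and
`H(N(p₂,τ))`. -/
theorem noise_curve_convex (τ : ℝ) (hτ : τ ∈ Set.Ioo (0 : ℝ) (1 / 2))
    (p p₁ p₂ : ℝ) (hp : p ∈ Set.Icc (0 : ℝ) (1 / 2))
    (hp₁ : p₁ ∈ Set.Icc (0 : ℝ) (1 / 2)) (hp₂ : p₂ ∈ Set.Icc (0 : ℝ) (1 / 2))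
    (t : ℝ) (ht : t ∈ Set.Icc (0 : ℝ) 1)
    (hcomb : binEnt p = (1 - t) * binEnt p₁ + t * binEnt p₂) :
    binEnt (noiseParam p τ) ≤
      (1 - t) * binEnt (noiseParam p₁ τ) + t * binEnt (noiseParam p₂ τ) := by
  have hlog2 : (0:ℝ) < Real.log 2 := Real.log_pos one_lt_two
  have hcomb' : Real.binEntropy p = (1-t) * Real.binEntropy p₁ + t * Real.binEntropy p₂ := by
    have h := hcomb
    simp only [MGLaux.binEnt_eq] at h
    field_simp at h
    linear_combination h
  have key : Real.binEntropy (noiseParam p τ) ≤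
      (1-t) * Real.binEntropy (noiseParam p₁ τ) + t * Real.binEntropy (noiseParam p₂ τ) := by
    rcases le_total p₁ p₂ with h | h
    · exact MGLaux.master hτ hp hp₁ hp₂ h ht hcomb'
    · have ht' : 1 - t ∈ Set.Icc (0:ℝ) 1 := ⟨by linarith [ht.2], by linarith [ht.1]⟩
      have hcomb'' : Real.binEntropy p =
          (1-(1-t)) * Real.binEntropy p₂ + (1-t) * Real.binEntropy p₁ := by
        linear_combination hcomb'
      have := MGLaux.master hτ hp hp₂ hp₁ h ht' hcomb''
      linarith
  simp only [MGLaux.binEnt_eq]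
  rw [show (1-t) * (Real.binEntropy (noiseParam p₁ τ) / Real.log 2) +
      t * (Real.binEntropy (noiseParam p₂ τ) / Real.log 2) =
      ((1-t) * Real.binEntropy (noiseParam p₁ τ) +
        t * Real.binEntropy (noiseParam p₂ τ)) / Real.log 2 from by ring]
  exact div_le_div_of_nonneg_right key hlog2.le
end

section
/- For fixed c ∈ (0,1), the function v ↦ ln((1+cv)/(1-cv)) / ln((1+v)/(1-v)) is (weakly) decreasing on (0,1). -/
open Real Set

noncomputable def L (x : ℝ) : ℝ := Real.log (1 + x) - Real.log (1 - x)

lemma hasDerivAt_L {x : ℝ} (hx1 : -1 < x) (hx2 : x < 1) :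
    HasDerivAt L (2 / (1 - x ^ 2)) x := by
  have h1 : (1 : ℝ) + x ≠ 0 := by nlinarith
  have h2 : (1 : ℝ) - x ≠ 0 := by nlinarith
  have d1 : HasDerivAt (fun y : ℝ => Real.log (1 + y)) (1 / (1 + x)) x := by
    have := (HasDerivAt.const_add 1 (hasDerivAt_id x)).log h1
    simpa using this
  have d2 : HasDerivAt (fun y : ℝ => Real.log (1 - y)) (-1 / (1 - x)) x := by
    have := (HasDerivAt.const_sub 1 (hasDerivAt_id x)).log h2
    simpa using this
  have := d1.sub d2
  refine HasDerivAt.congr_deriv (f := L) this ?_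
  have h3 : (1:ℝ) - x ^ 2 ≠ 0 := by nlinarith
  field_simp
  ring

lemma L_nonneg {x : ℝ} (hx0 : 0 ≤ x) (hx1 : x < 1) : 0 ≤ L x := by
  have : Real.log (1 - x) ≤ Real.log (1 + x) :=
    Real.log_le_log (by linarith) (by linarith)
  simpa [L, sub_nonneg] using this

lemma L_pos {x : ℝ} (hx0 : 0 < x) (hx1 : x < 1) : 0 < L x := by
  have : Real.log (1 - x) < Real.log (1 + x) :=
    Real.log_lt_log (by linarith) (by linarith)
  simpa [L, sub_pos] using this

lemma L_contOn : ContinuousOn L (Ico (0:ℝ) 1) := by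
  apply ContinuousOn.sub
  · apply ContinuousOn.log
    · fun_prop
    · intro x hx; simp only [mem_Ico] at hx; nlinarith [hx.1, hx.2]
  · apply ContinuousOn.log
    · fun_prop
    · intro x hx; simp only [mem_Ico] at hx; nlinarith [hx.1, hx.2]

lemma L_ge {x : ℝ} (hx0 : 0 ≤ x) (hx1 : x < 1) : 2 * x ≤ L x := by
  set F : ℝ → ℝ := fun y => L y - 2 * y with hF
  have hder : ∀ y ∈ Ioo (0:ℝ) 1, HasDerivAt F (2 / (1 - y ^ 2) - 2) y := by
    intro y hy
    exact (hasDerivAt_L (by linarith [hy.1]) hy.2).sub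
      (by simpa using (hasDerivAt_id y).const_mul (2:ℝ))
  have hmono : MonotoneOn F (Ico (0:ℝ) 1) := by
    apply monotoneOn_of_deriv_nonneg (convex_Ico 0 1)
    · exact L_contOn.sub (by fun_prop)
    · rw [interior_Ico]
      intro y hy
      exact (hder y hy).differentiableAt.differentiableWithinAt
    · rw [interior_Ico]
      intro y hy
      rw [(hder y hy).deriv]
      have h1 : 0 < 1 - y ^ 2 := by nlinarith [hy.1, hy.2]
      rw [sub_nonneg, le_div_iff₀ h1]
      nlinarith [hy.1, hy.2]
  have h0 : F 0 ≤ F x := hmono ⟨le_refl 0, one_pos⟩ ⟨hx0, hx1⟩ hx0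
  have : F 0 = 0 := by simp [hF, L]
  rw [this] at h0
  simpa [hF, sub_nonneg] using h0

/-- `x ↦ (1 - x²) L x / x` is antitone on `(0,1)`. -/
lemma h_anti : AntitoneOn (fun x : ℝ => (1 - x ^ 2) * L x / x) (Ioo (0:ℝ) 1) := by
  have hder : ∀ x ∈ Ioo (0:ℝ) 1, HasDerivAt (fun x : ℝ => (1 - x ^ 2) * L x / x)
      ((((-(2 * x)) * L x + (1 - x ^ 2) * (2 / (1 - x ^ 2))) * x - (1 - x ^ 2) * L x * 1) / x ^ 2) x := by
    intro x hx
    have hx0 : (0:ℝ) < x := hx.1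
    have dnum : HasDerivAt (fun x : ℝ => (1 - x ^ 2) * L x)
        ((-(2 * x)) * L x + (1 - x ^ 2) * (2 / (1 - x ^ 2))) x := by
      have d1 : HasDerivAt (fun x : ℝ => 1 - x ^ 2) (-(2 * x)) x := by
        have := (hasDerivAt_pow 2 x).const_sub (1:ℝ)
        simpa using this
      exact d1.mul (hasDerivAt_L (by linarith) hx.2)
    exact dnum.div (hasDerivAt_id x) (ne_of_gt hx0)
  apply antitoneOn_of_deriv_nonpos (convex_Ioo 0 1)
  · intro x hx
    exact (hder x hx).differentiableAt.continuousAt.continuousWithinAt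
  · rw [interior_Ioo]
    intro x hx
    exact (hder x hx).differentiableAt.differentiableWithinAt
  · rw [interior_Ioo]
    intro x hx
    rw [(hder x hx).deriv]
    have hx0 : (0:ℝ) < x := hx.1
    have hq : (0:ℝ) < 1 - x ^ 2 := by nlinarith [hx.1, hx.2]
    apply div_nonpos_of_nonpos_of_nonneg _ (sq_nonneg x)
    have hcan : (1 - x ^ 2) * (2 / (1 - x ^ 2)) = 2 := by
      field_simp
    rw [hcan]
    have h1 := L_ge hx0.le hx.2
    have h2 := L_nonneg hx0.le hx.2
    nlinarith [sq_nonneg x]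

/-- For fixed `c ∈ (0,1)`, the ratio `ln((1+cv)/(1-cv)) / ln((1+v)/(1-v))`
is weakly decreasing in `v` on `(0,1)`. -/
theorem log_ratio_antitone (c : ℝ) (hc : c ∈ Set.Ioo (0 : ℝ) 1) :
    AntitoneOn (fun v : ℝ =>
      Real.log ((1 + c * v) / (1 - c * v)) / Real.log ((1 + v) / (1 - v)))
      (Set.Ioo (0 : ℝ) 1) := by
  obtain ⟨hc0, hc1⟩ := hc
  -- the nicer function g
  have key : AntitoneOn (fun v : ℝ => L (c * v) / L v) (Ioo (0:ℝ) 1) := by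
    have hder : ∀ v ∈ Ioo (0:ℝ) 1, HasDerivAt (fun v : ℝ => L (c * v) / L v)
        ((2 / (1 - (c * v) ^ 2) * c * L v - L (c * v) * (2 / (1 - v ^ 2))) / (L v) ^ 2) v := by
      intro v hv
      obtain ⟨hv0, hv1⟩ := hv
      have hcv0 : 0 < c * v := mul_pos hc0 hv0
      have hcv1 : c * v < 1 := by nlinarith
      have dcv : HasDerivAt (fun v : ℝ => c * v) c v := by
        simpa using (hasDerivAt_id v).const_mul c
      have dnum : HasDerivAt (fun v : ℝ => L (c * v)) (2 / (1 - (c * v) ^ 2) * c) v :=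
        (hasDerivAt_L (by linarith) hcv1).comp v dcv
      exact dnum.div (hasDerivAt_L (by linarith) hv1) (ne_of_gt (L_pos hv0 hv1))
    apply antitoneOn_of_deriv_nonpos (convex_Ioo 0 1)
    · intro v hv
      exact (hder v hv).differentiableAt.continuousAt.continuousWithinAt
    · rw [interior_Ioo]
      intro v hv
      exact (hder v hv).differentiableAt.differentiableWithinAt
    · rw [interior_Ioo]
      intro v hv
      rw [(hder v hv).deriv]
      obtain ⟨hv0, hv1⟩ := hv
      have hcv0 : 0 < c * v := mul_pos hc0 hv0
      have hcv1 : c * v < 1 := by nlinarith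
      apply div_nonpos_of_nonpos_of_nonneg _ (sq_nonneg _)
      set p : ℝ := 1 - (c * v) ^ 2 with hp'
      set q : ℝ := 1 - v ^ 2 with hq'
      have hp : 0 < p := by simp only [hp']; nlinarith
      have hq : 0 < q := by simp only [hq']; nlinarith
      set A : ℝ := L (c * v) with hA'
      set B : ℝ := L v with hB'
      have hApos : 0 < A := L_pos hcv0 hcv1
      have hBpos : 0 < B := L_pos hv0 hv1
      -- from h_anti : p * A / (c*v) ≥ q * B / v
      have hh := h_anti ⟨hcv0, hcv1⟩ ⟨hv0, hv1⟩ (by nlinarith)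
      simp only at hh
      rw [div_le_div_iff₀ hv0 hcv0, ← hp', ← hq', ← hA', ← hB'] at hh
      -- hh : q * B * (c * v) ≤ p * A * v
      have hkey : c * q * B ≤ p * A := by
        exact (mul_le_mul_iff_of_pos_right hv0).mp (by nlinarith [hh])
      have hN : (2 / p * c * B - A * (2 / q)) * (p * q) = 2 * c * B * q - 2 * A * p := by
        field_simp
      have hNle : (2 / p * c * B - A * (2 / q)) * (p * q) ≤ 0 := by
        rw [hN]; nlinarith [hkey]
      have := le_of_mul_le_mul_right (by simpa using hNle :
        (2 / p * c * B - A * (2 / q)) * (p * q) ≤ 0 * (p * q)) (mul_pos hp hq)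
      linarith
  -- transfer to the stated function
  intro a ha b hb hab
  have e : ∀ x ∈ Ioo (0:ℝ) 1, Real.log ((1 + c * x) / (1 - c * x)) / Real.log ((1 + x) / (1 - x))
      = L (c * x) / L x := by
    intro x hx
    obtain ⟨hx0, hx1⟩ := hx
    have hcx0 : 0 < c * x := mul_pos hc0 hx0
    have hcx1 : c * x < 1 := by nlinarith
    rw [Real.log_div (by nlinarith) (by nlinarith), Real.log_div (by nlinarith) (by nlinarith)]
    rfl
  simp only [e a ha, e b hb]
  exact key ha hb hab
end

section
/- Let x₁ > x₂ > … > x_n be reals and m₁,…,m_n, m'₁,…,m'_n positive reals such that m'_j/m'_i ≥ m_j/m_i whenever j > i. Then the weighted average (Σᵢ m'ᵢ xᵢ)/(Σᵢ m'ᵢ) ≤ (Σᵢ mᵢ xᵢ)/(Σᵢ mᵢ). -/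
open Finset

/-- Center-of-gravity monotonicity: if the points `x₁ > x₂ > … > xₙ` are
reweighted so that the relative weight of later (smaller) points increases,
then the weighted average decreases. -/
theorem center_of_gravity_monotone {n : ℕ} (x m m' : Fin n → ℝ)
    (hx : ∀ i j : Fin n, i < j → x j < x i)
    (hm : ∀ i, 0 < m i) (hm' : ∀ i, 0 < m' i)
    (hratio : ∀ i j : Fin n, i < j → m j / m i ≤ m' j / m' i) :
    (∑ i, m' i * x i) / (∑ i, m' i) ≤ (∑ i, m i * x i) / (∑ i, m i) := by
  rcases Nat.eq_zero_or_pos n with rfl | hn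
  · simp
  have : Nonempty (Fin n) := ⟨⟨0, hn⟩⟩
  have hS : 0 < ∑ i, m i := Finset.sum_pos (fun i _ => hm i) Finset.univ_nonempty
  have hS' : 0 < ∑ i, m' i := Finset.sum_pos (fun i _ => hm' i) Finset.univ_nonempty
  rw [div_le_div_iff₀ hS' hS]
  have key : 0 ≤ ∑ i, ∑ j, (x i - x j) * (m i * m' j - m' i * m j) := by
    refine Finset.sum_nonneg fun i _ => Finset.sum_nonneg fun j _ => ?_
    rcases lt_trichotomy i j with h | h | h
    · have h1 : 0 < x i - x j := sub_pos.2 (hx i j h)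
      have h2 : m j * m' i ≤ m' j * m i := by
        have := hratio i j h
        rwa [div_le_div_iff₀ (hm i) (hm' i)] at this
      nlinarith
    · simp [h]
    · have h1 : x i - x j ≤ 0 := sub_nonpos.2 (hx j i h).le
      have h2 : m i * m' j ≤ m' i * m j := by
        have := hratio j i h
        rwa [div_le_div_iff₀ (hm j) (hm' j)] at this
      nlinarith
  have e : ∀ (a b : Fin n → ℝ), ∑ i, ∑ j, x i * a i * b j = (∑ i, a i * x i) * (∑ j, b j) := by
    intro a b
    rw [Finset.sum_mul]
    refine Finset.sum_congr rfl fun i _ => ?_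
    rw [Finset.mul_sum]
    exact Finset.sum_congr rfl fun j _ => by ring
  have e3 : ∀ (a b : Fin n → ℝ), ∑ i, ∑ j, x j * a i * b j = (∑ j, b j * x j) * (∑ i, a i) := by
    intro a b
    rw [Finset.sum_comm]
    rw [Finset.sum_mul]
    refine Finset.sum_congr rfl fun j _ => ?_
    rw [Finset.mul_sum]
    exact Finset.sum_congr rfl fun i _ => by ring
  have expand : ∑ i, ∑ j, (x i - x j) * (m i * m' j - m' i * m j)
      = 2 * ((∑ i, m i * x i) * (∑ i, m' i) - (∑ i, m' i * x i) * (∑ i, m i)) := by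
    have h1 : ∀ i j : Fin n, (x i - x j) * (m i * m' j - m' i * m j)
        = (x i * m i * m' j - x i * m' i * m j) - (x j * m i * m' j - x j * m' i * m j) := by
      intros; ring
    simp only [h1, Finset.sum_sub_distrib]
    rw [e m m', e m' m, e3 m m', e3 m' m]
    ring
  linarith [key, expand ▸ key]
end
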